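/- arXiv:1612.04740 — 5 statements merged into one kernel-verified Lean document; each statement's English description precedes it below -/
import Mathlib

section
/- Suppose n ≥ 2 and the variance assumption holds: max_{1≤i≤n} E‖ε_i‖_H² ≤ V < ∞. For any y > 0 there exists an event Ω₂ with P(Ω₂) ≥ 1 − 1/y² on which the following holds: for any δ ∈ (0, Λ̲_{τ*}] and any minimizer τ̂ of the empirical risk R̂_n(τ) over the segmentations τ ∈ T_n with exactly D_{τ*} segments and Λ̲_τ ≥ δ, if v₂(y,δ) := 24 D_{τ*}² (Δ̄ √V / Δ̲²) · y/√n + 8 D_{τ*} (V/Δ̲²) · y²/(n δ) ≤ Λ̲_{τ*}, then (1/n) d∞^{(1)}(τ*, τ̂) ≤ v₂(y,δ). -/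
open MeasureTheory ProbabilityTheory

/-- A segmentation of `{1, …, n}` with `D` segments: integers
`0 = t 0 < t 1 < ⋯ < t D = n`. -/
structure Seg (n : ℕ) where
  D : ℕ
  t : ℕ → ℕ
  hD : 0 < D
  h0 : t 0 = 0
  hn : t D = n
  hmono : ∀ ℓ < D, t ℓ < t (ℓ + 1)

namespace Seg

variable {n : ℕ}

/-- The `ℓ`-th segment (`0`-based) of a segmentation, as a set of `0`-based indices:
it corresponds to the paper's segment `λ_{ℓ+1} = {t ℓ + 1, …, t (ℓ+1)}` (1-based). -/
def seg (τ : Seg n) (ℓ : ℕ) : Finset (Fin n) :=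
  Finset.univ.filter fun j => τ.t ℓ ≤ (j : ℕ) ∧ (j : ℕ) < τ.t (ℓ + 1)

/-- `Λ̲_τ`: normalized size of the smallest segment. -/
noncomputable def lamMin (τ : Seg n) : ℝ :=
  (((Finset.range τ.D).inf' (Finset.nonempty_range_iff.mpr τ.hD.ne')
      fun ℓ => τ.t (ℓ + 1) - τ.t ℓ : ℕ) : ℝ) / n

/-- `Λ̄_τ`: normalized size of the largest segment. -/
noncomputable def lamMax (τ : Seg n) : ℝ :=
  (((Finset.range τ.D).sup' (Finset.nonempty_range_iff.mpr τ.hD.ne')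
      fun ℓ => τ.t (ℓ + 1) - τ.t ℓ : ℕ) : ℝ) / n

/-- `d∞^{(1)}(τ¹,τ²) = max_{1 ≤ i ≤ D₁−1} min_{1 ≤ j ≤ D₂−1} |τ¹_i − τ²_j|`
(with natural conventions in the degenerate cases where a segmentation has no
interior change-point). -/
noncomputable def dinf1 (τ1 τ2 : Seg n) : ℕ :=
  if h : 2 ≤ τ1.D ∧ 2 ≤ τ2.D then
    (Finset.Ioo 0 τ1.D).sup fun i =>
      (Finset.Ioo 0 τ2.D).inf' ⟨1, Finset.mem_Ioo.mpr ⟨Nat.one_pos, by omega⟩⟩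
        fun j => Nat.dist (τ1.t i) (τ2.t j)
  else if τ1.D = τ2.D then 0 else n

/-- `d∞^{(2)}(τ¹,τ²) = max_{1 ≤ i ≤ D₁−1} min_{0 ≤ j ≤ D₂} |τ¹_i − τ²_j|`. -/
noncomputable def dinf2 (τ1 τ2 : Seg n) : ℕ :=
  (Finset.Ioo 0 τ1.D).sup fun i =>
    (Finset.Icc 0 τ2.D).inf' ⟨0, Finset.mem_Icc.mpr ⟨le_rfl, Nat.zero_le _⟩⟩
      fun j => Nat.dist (τ1.t i) (τ2.t j)

/-- `d∞^{(3)}(τ¹,τ²) = max_{1 ≤ i ≤ D₁−1} |τ¹_i − τ²_i|` (meaningful when `D₁ = D₂`). -/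
noncomputable def dinf3 (τ1 τ2 : Seg n) : ℕ :=
  (Finset.Ioo 0 τ1.D).sup fun i => Nat.dist (τ1.t i) (τ2.t i)

/-- `d_H^{(1)}`. -/
noncomputable def dH1 (τ1 τ2 : Seg n) : ℕ := max (dinf1 τ1 τ2) (dinf1 τ2 τ1)

/-- `d_H^{(2)}`. -/
noncomputable def dH2 (τ1 τ2 : Seg n) : ℕ := max (dinf2 τ1 τ2) (dinf2 τ2 τ1)

/-- The matrix of the orthogonal projection `Π_τ`:
`(Π_τ)_{ij} = 1/|λ|` if `i, j` are in the same segment `λ` of `τ`, and `0` otherwise. -/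
noncomputable def Pmat (τ : Seg n) : Fin n → Fin n → ℝ := fun i j =>
  ∑ ℓ ∈ Finset.range τ.D, if i ∈ τ.seg ℓ ∧ j ∈ τ.seg ℓ then ((τ.seg ℓ).card : ℝ)⁻¹ else 0

/-- The Frobenius loss `d_F(τ¹,τ²) = ‖Π_{τ¹} − Π_{τ²}‖_F`. -/
noncomputable def dF (τ1 τ2 : Seg n) : ℝ :=
  Real.sqrt (∑ i, ∑ j, (Pmat τ1 i j - Pmat τ2 i j) ^ 2)

/-- The orthogonal projection `Π_τ : H^n → H^n` onto vectors constant on each segment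
of `τ`: `(Π_τ x)_i` is the average of `x` over the segment of `τ` containing `i`. -/
noncomputable def proj {H : Type*} [AddCommGroup H] [Module ℝ H]
    (τ : Seg n) (x : Fin n → H) : Fin n → H := fun i =>
  ∑ ℓ ∈ Finset.range τ.D,
    if τ.t ℓ ≤ (i : ℕ) ∧ (i : ℕ) < τ.t (ℓ + 1)
    then (((τ.t (ℓ + 1) - τ.t ℓ : ℕ) : ℝ))⁻¹ • ∑ j ∈ τ.seg ℓ, x j
    else 0

end Seg

/-- Squared norm on `H^n`: `‖x‖² = Σ_i ‖x_i‖²`. -/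
noncomputable def hnorm2 {n : ℕ} {H : Type*} [NormedAddCommGroup H] (x : Fin n → H) : ℝ :=
  ∑ i, ‖x i‖ ^ 2

/-- Inner product on `H^n`: `⟨x, y⟩ = Σ_i ⟨x_i, y_i⟩_H`. -/
noncomputable def hinner {n : ℕ} {H : Type*} [NormedAddCommGroup H] [InnerProductSpace ℝ H]
    (x y : Fin n → H) : ℝ := ∑ i, inner ℝ (x i) (y i)

/-- `τ` is the true segmentation of `m ∈ H^n`: `m` is constant on every segment of `τ`
and jumps at every interior change-point of `τ`. -/
def IsTrueSeg {n : ℕ} {H : Type*} (τ : Seg n) (m : Fin n → H) : Prop :=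
  (∀ ℓ < τ.D, ∀ i ∈ τ.seg ℓ, ∀ j ∈ τ.seg ℓ, m i = m j) ∧
  ∀ ℓ, 0 < ℓ → ℓ < τ.D → ∀ (h1 : τ.t ℓ - 1 < n) (h2 : τ.t ℓ < n),
    m ⟨τ.t ℓ - 1, h1⟩ ≠ m ⟨τ.t ℓ, h2⟩

/-- The size `‖μ*_{t ℓ + 1} − μ*_{t ℓ}‖` (paper indexing) of the jump of `m` at
the change-point `t ℓ` of `τ`. -/
noncomputable def jumpAt {n : ℕ} {H : Type*} [NormedAddCommGroup H]
    (τ : Seg n) (m : Fin n → H) (ℓ : ℕ) : ℝ :=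
  if h : 0 < τ.t ℓ ∧ τ.t ℓ < n then ‖m ⟨τ.t ℓ, h.2⟩ - m ⟨τ.t ℓ - 1, by omega⟩‖ else 0

/-- `Δ̲`: size of the smallest jump of `m` (over the change-points of `τ`). -/
noncomputable def deltaMin {n : ℕ} {H : Type*} [NormedAddCommGroup H]
    (τ : Seg n) (m : Fin n → H) : ℝ :=
  if h : 2 ≤ τ.D then
    (Finset.Ioo 0 τ.D).inf' ⟨1, Finset.mem_Ioo.mpr ⟨Nat.one_pos, by omega⟩⟩ (jumpAt τ m)
  else 0

/-- `Δ̄`: size of the largest jump of `m` (over the change-points of `τ`). -/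
noncomputable def deltaMax {n : ℕ} {H : Type*} [NormedAddCommGroup H]
    (τ : Seg n) (m : Fin n → H) : ℝ :=
  if h : 2 ≤ τ.D then
    (Finset.Ioo 0 τ.D).sup' ⟨1, Finset.mem_Ioo.mpr ⟨Nat.one_pos, by omega⟩⟩ (jumpAt τ m)
  else 0

/-- The value of `m` at the first index of the `ℓ`-th segment of `τ`; if `m` is constant
on each segment of `τ`, this is the common value `μ*_{λ_ℓ}` of `m` on that segment. -/
noncomputable def segVal {n : ℕ} {H : Type*} [AddCommGroup H]
    (τ : Seg n) (m : Fin n → H) (ℓ : ℕ) : H :=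
  if h : τ.t ℓ < n then m ⟨τ.t ℓ, h⟩ else 0

/-- `M_n = max_{1 ≤ k ≤ n} ‖ε_1 + ⋯ + ε_k‖` (the value at `k = 0` is `0`, which does not
affect the maximum). -/
noncomputable def Mmax {n : ℕ} {H : Type*} [NormedAddCommGroup H] (ε : Fin n → H) : ℝ :=
  (Finset.range (n + 1)).sup' (Finset.nonempty_range_iff.mpr (Nat.succ_ne_zero n))
    fun k => ‖∑ j ∈ Finset.univ.filter (fun j : Fin n => (j : ℕ) < k), ε j‖


set_option linter.unusedSectionVars false
set_option linter.unusedVariables false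

section Part1

open Finset

variable {n : ℕ} {H : Type*}

namespace Seg

lemma t_le_t (τ : Seg n) {a b : ℕ} (hab : a ≤ b) (hb : b ≤ τ.D) : τ.t a ≤ τ.t b := by
  induction b with
  | zero => have : a = 0 := by omega
            simp [this]
  | succ b ih =>
    rcases Nat.eq_or_lt_of_le hab with h | h
    · rw [h]
    · have h1 : τ.t a ≤ τ.t b := ih (by omega) (by omega)
      have h2 : τ.t b < τ.t (b+1) := τ.hmono b (by omega)
      omega

lemma t_lt_t (τ : Seg n) {a b : ℕ} (hab : a < b) (hb : b ≤ τ.D) : τ.t a < τ.t b := by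
  have h1 : τ.t a ≤ τ.t (b-1) := τ.t_le_t (by omega) (by omega)
  have h2 : τ.t (b-1) < τ.t b := by
    have := τ.hmono (b-1) (by omega)
    have hb1 : b - 1 + 1 = b := by omega
    rwa [hb1] at this
  omega

lemma t_le_n (τ : Seg n) {a : ℕ} (ha : a ≤ τ.D) : τ.t a ≤ n := by
  have := τ.t_le_t ha le_rfl
  rw [τ.hn] at this; exact this

/-- every index belongs to a segment -/
lemma exists_seg (τ : Seg n) (i : ℕ) (hi : i < n) :
    ∃ ℓ < τ.D, τ.t ℓ ≤ i ∧ i < τ.t (ℓ + 1) := by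
  have key : ∀ k, k ≤ τ.D → i < τ.t k → ∃ ℓ < k, τ.t ℓ ≤ i ∧ i < τ.t (ℓ + 1) := by
    intro k
    induction k with
    | zero => intro _ h; rw [τ.h0] at h; omega
    | succ k ih =>
      intro hk h
      by_cases hc : τ.t k ≤ i
      · exact ⟨k, by omega, hc, h⟩
      · obtain ⟨ℓ, h1, h2⟩ := ih (by omega) (by omega)
        exact ⟨ℓ, by omega, h2⟩
  exact key τ.D le_rfl (by rw [τ.hn]; exact hi)

lemma card_filter_Ico {a b : ℕ} (hb : b ≤ n) :
    (Finset.univ.filter fun j : Fin n => a ≤ (j : ℕ) ∧ (j : ℕ) < b).card = b - a := by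
  have h : ∀ m ∈ Finset.Ico a b, m < n := fun m hm => by
    have := (Finset.mem_Ico.mp hm).2; omega
  have : (Finset.univ.filter fun j : Fin n => a ≤ (j : ℕ) ∧ (j : ℕ) < b)
      = (Finset.Ico a b).attachFin h := by
    ext j
    simp [Finset.mem_attachFin, Finset.mem_Ico]
  rw [this, Finset.card_attachFin, Nat.card_Ico]

lemma mem_seg {τ : Seg n} {ℓ : ℕ} {j : Fin n} :
    j ∈ τ.seg ℓ ↔ τ.t ℓ ≤ (j : ℕ) ∧ (j : ℕ) < τ.t (ℓ + 1) := by
  simp [Seg.seg]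

lemma card_seg (τ : Seg n) {ℓ : ℕ} (hℓ : ℓ < τ.D) :
    (τ.seg ℓ).card = τ.t (ℓ + 1) - τ.t ℓ :=
  card_filter_Ico (τ.t_le_n (by omega))

lemma card_seg_pos (τ : Seg n) {ℓ : ℕ} (hℓ : ℓ < τ.D) : 0 < (τ.seg ℓ).card := by
  rw [τ.card_seg hℓ]
  have := τ.hmono ℓ hℓ; omega

/-- partition of the sum over `Fin n` into segments -/
lemma sum_segs {M : Type*} [AddCommMonoid M] (τ : Seg n) (f : Fin n → M) :
    ∑ i, f i = ∑ ℓ ∈ Finset.range τ.D, ∑ i ∈ τ.seg ℓ, f i := by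
  rw [← Finset.sum_biUnion]
  · congr 1
    ext i
    simp only [Finset.mem_biUnion, Finset.mem_range, mem_seg, Finset.mem_univ, true_iff]
    obtain ⟨ℓ, h1, h2, h3⟩ := τ.exists_seg i i.isLt
    exact ⟨ℓ, h1, h2, h3⟩
  · intro a ha b hb hab
    simp only [Finset.coe_range, Set.mem_Iio] at ha hb
    refine Finset.disjoint_left.mpr fun j hja hjb => hab ?_
    rw [mem_seg] at hja hjb
    rcases lt_trichotomy a b with h | h | h
    · have := τ.t_le_t (show a + 1 ≤ b by omega) (by omega); omega
    · exact h
    · have := τ.t_le_t (show b + 1 ≤ a by omega) (by omega); omega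

/-- partial sums -/
def psum {M : Type*} [AddCommMonoid M] (x : Fin n → M) (k : ℕ) : M :=
  ∑ j ∈ Finset.univ.filter (fun j : Fin n => (j : ℕ) < k), x j

lemma sum_seg_eq_psum {M : Type*} [AddCommGroup M] (τ : Seg n) (x : Fin n → M) {ℓ : ℕ}
    (hℓ : ℓ < τ.D) :
    ∑ j ∈ τ.seg ℓ, x j = psum x (τ.t (ℓ + 1)) - psum x (τ.t ℓ) := by
  have hmono := τ.hmono ℓ hℓ
  have hsub : (Finset.univ.filter fun j : Fin n => (j : ℕ) < τ.t ℓ)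
      ⊆ (Finset.univ.filter fun j : Fin n => (j : ℕ) < τ.t (ℓ + 1)) := by
    intro j hj
    simp only [Finset.mem_filter] at hj ⊢
    exact ⟨hj.1, by omega⟩
  have hseg : τ.seg ℓ = (Finset.univ.filter fun j : Fin n => (j : ℕ) < τ.t (ℓ + 1))
      \ (Finset.univ.filter fun j : Fin n => (j : ℕ) < τ.t ℓ) := by
    ext j
    simp only [mem_seg, Finset.mem_sdiff, Finset.mem_filter, Finset.mem_univ, true_and]
    omega
  rw [hseg, Finset.sum_sdiff_eq_sub hsub]
  rfl

end Seg

end Part1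
section Part2

open Finset RealInnerProductSpace

variable {n : ℕ} {H : Type*} [NormedAddCommGroup H] [InnerProductSpace ℝ H]

namespace Seg

lemma proj_eq_on_seg (τ : Seg n) (x : Fin n → H) {ℓ : ℕ} (hℓ : ℓ < τ.D) {i : Fin n}
    (hi : i ∈ τ.seg ℓ) :
    Seg.proj τ x i = (((τ.t (ℓ + 1) - τ.t ℓ : ℕ) : ℝ))⁻¹ • ∑ j ∈ τ.seg ℓ, x j := by
  rw [mem_seg] at hi
  show (∑ ℓ' ∈ Finset.range τ.D, if τ.t ℓ' ≤ (i : ℕ) ∧ (i : ℕ) < τ.t (ℓ' + 1)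
    then (((τ.t (ℓ' + 1) - τ.t ℓ' : ℕ) : ℝ))⁻¹ • ∑ j ∈ τ.seg ℓ', x j else 0) = _
  rw [Finset.sum_eq_single_of_mem ℓ (Finset.mem_range.mpr hℓ)]
  · rw [if_pos hi]
  · intro b hb hba
    rw [Finset.mem_range] at hb
    rw [if_neg]
    intro hcon
    rcases lt_or_gt_of_ne hba with h | h
    · have := τ.t_le_t (show b + 1 ≤ ℓ by omega) (by omega); omega
    · have := τ.t_le_t (show ℓ + 1 ≤ b by omega) (by omega); omega

lemma len_cast_ne_zero (τ : Seg n) {ℓ : ℕ} (hℓ : ℓ < τ.D) :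
    ((τ.t (ℓ + 1) - τ.t ℓ : ℕ) : ℝ) ≠ 0 := by
  have := τ.hmono ℓ hℓ
  exact_mod_cast (by omega : (τ.t (ℓ + 1) - τ.t ℓ : ℕ) ≠ 0)

lemma sum_proj_seg (τ : Seg n) (x : Fin n → H) {ℓ : ℕ} (hℓ : ℓ < τ.D) :
    ∑ j ∈ τ.seg ℓ, Seg.proj τ x j = ∑ j ∈ τ.seg ℓ, x j := by
  rw [Finset.sum_congr rfl fun j hj => τ.proj_eq_on_seg x hℓ hj, Finset.sum_const,
    τ.card_seg hℓ, ← Nat.cast_smul_eq_nsmul ℝ, smul_smul,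
    mul_inv_cancel₀ (τ.len_cast_ne_zero hℓ), one_smul]

lemma hinner_proj_left (τ : Seg n) (x y : Fin n → H) :
    hinner (Seg.proj τ x) y = ∑ ℓ ∈ Finset.range τ.D,
      (((τ.t (ℓ + 1) - τ.t ℓ : ℕ) : ℝ))⁻¹ * ⟪∑ j ∈ τ.seg ℓ, x j, ∑ j ∈ τ.seg ℓ, y j⟫ := by
  rw [hinner, τ.sum_segs]
  refine Finset.sum_congr rfl fun ℓ hℓ => ?_
  rw [Finset.mem_range] at hℓ
  rw [Finset.sum_congr rfl fun i hi => by rw [τ.proj_eq_on_seg x hℓ hi],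
    ← inner_sum, real_inner_smul_left]

lemma hinner_proj_right (τ : Seg n) (x y : Fin n → H) :
    hinner x (Seg.proj τ y) = ∑ ℓ ∈ Finset.range τ.D,
      (((τ.t (ℓ + 1) - τ.t ℓ : ℕ) : ℝ))⁻¹ * ⟪∑ j ∈ τ.seg ℓ, x j, ∑ j ∈ τ.seg ℓ, y j⟫ := by
  rw [hinner, τ.sum_segs]
  refine Finset.sum_congr rfl fun ℓ hℓ => ?_
  rw [Finset.mem_range] at hℓ
  rw [Finset.sum_congr rfl fun i hi => by rw [τ.proj_eq_on_seg y hℓ hi],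
    ← sum_inner, real_inner_smul_right]

lemma proj_add (τ : Seg n) (x y : Fin n → H) (i : Fin n) :
    Seg.proj τ (fun j => x j + y j) i = Seg.proj τ x i + Seg.proj τ y i := by
  unfold Seg.proj
  rw [← Finset.sum_add_distrib]
  refine Finset.sum_congr rfl fun ℓ _ => ?_
  split_ifs
  · rw [Finset.sum_add_distrib, smul_add]
  · rw [add_zero]

lemma proj_sub (τ : Seg n) (x y : Fin n → H) (i : Fin n) :
    Seg.proj τ (fun j => x j - y j) i = Seg.proj τ x i - Seg.proj τ y i := by
  unfold Seg.proj
  rw [← Finset.sum_sub_distrib]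
  refine Finset.sum_congr rfl fun ℓ _ => ?_
  split_ifs
  · rw [Finset.sum_sub_distrib, smul_sub]
  · rw [sub_zero]

lemma proj_fix (τ : Seg n) (x : Fin n → H)
    (hc : ∀ ℓ < τ.D, ∀ i ∈ τ.seg ℓ, ∀ j ∈ τ.seg ℓ, x i = x j) (i : Fin n) :
    Seg.proj τ x i = x i := by
  obtain ⟨ℓ, hℓ, h1, h2⟩ := τ.exists_seg i i.isLt
  have hi : i ∈ τ.seg ℓ := mem_seg.mpr ⟨h1, h2⟩
  rw [τ.proj_eq_on_seg x hℓ hi,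
    Finset.sum_congr rfl fun j hj => (hc ℓ hℓ i hi j hj).symm, Finset.sum_const,
    τ.card_seg hℓ, ← Nat.cast_smul_eq_nsmul ℝ, smul_smul,
    inv_mul_cancel₀ (τ.len_cast_ne_zero hℓ), one_smul]

lemma proj_const (τ : Seg n) (a : H) (i : Fin n) :
    Seg.proj τ (fun _ => a) i = a :=
  τ.proj_fix _ (by intro ℓ _ i _ j _; rfl) i

end Seg

lemma hinner_comm {n : ℕ} (x y : Fin n → H) : hinner x y = hinner y x := by
  unfold hinner
  exact Finset.sum_congr rfl fun i _ => real_inner_comm _ _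

lemma hinner_sub_left {n : ℕ} (x y z : Fin n → H) :
    hinner (fun i => x i - y i) z = hinner x z - hinner y z := by
  unfold hinner
  rw [← Finset.sum_sub_distrib]
  exact Finset.sum_congr rfl fun i _ => inner_sub_left _ _ _

lemma hinner_add_left {n : ℕ} (x y z : Fin n → H) :
    hinner (fun i => x i + y i) z = hinner x z + hinner y z := by
  unfold hinner
  rw [← Finset.sum_add_distrib]
  exact Finset.sum_congr rfl fun i _ => inner_add_left _ _ _

lemma hnorm2_eq_hinner {n : ℕ} (x : Fin n → H) : hnorm2 x = hinner x x := by
  unfold hnorm2 hinner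
  exact Finset.sum_congr rfl fun i _ => (real_inner_self_eq_norm_sq _).symm

lemma hnorm2_nonneg {n : ℕ} (x : Fin n → H) : 0 ≤ hnorm2 x :=
  Finset.sum_nonneg fun i _ => sq_nonneg _

lemma hnorm2_sub_expand {n : ℕ} (x y : Fin n → H) :
    hnorm2 (fun i => x i - y i) = hnorm2 x - 2 * hinner x y + hnorm2 y := by
  unfold hnorm2 hinner
  rw [Finset.mul_sum, ← Finset.sum_sub_distrib, ← Finset.sum_add_distrib]
  exact Finset.sum_congr rfl fun i _ => norm_sub_sq_real _ _

lemma hnorm2_add_expand {n : ℕ} (x y : Fin n → H) :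
    hnorm2 (fun i => x i + y i) = hnorm2 x + 2 * hinner x y + hnorm2 y := by
  unfold hnorm2 hinner
  rw [Finset.mul_sum, ← Finset.sum_add_distrib, ← Finset.sum_add_distrib]
  exact Finset.sum_congr rfl fun i _ => norm_add_sq_real _ _

/-- `⟨x, Πx⟩ = ‖Πx‖²` -/
lemma hinner_self_proj {n : ℕ} (τ : Seg n) (x : Fin n → H) :
    hinner x (Seg.proj τ x) = hnorm2 (Seg.proj τ x) := by
  rw [hnorm2_eq_hinner, Seg.hinner_proj_right, Seg.hinner_proj_left]
  refine Finset.sum_congr rfl fun ℓ hℓ => ?_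
  rw [Finset.mem_range] at hℓ
  rw [τ.sum_proj_seg x hℓ]

lemma hnorm2_proj_eq {n : ℕ} (τ : Seg n) (x : Fin n → H) :
    hnorm2 (Seg.proj τ x) = ∑ ℓ ∈ Finset.range τ.D,
      (((τ.t (ℓ + 1) - τ.t ℓ : ℕ) : ℝ))⁻¹ * ‖∑ j ∈ τ.seg ℓ, x j‖ ^ 2 := by
  rw [← hinner_self_proj, Seg.hinner_proj_right]
  exact Finset.sum_congr rfl fun ℓ _ => by rw [real_inner_self_eq_norm_sq]

lemma hnorm2_sub_proj {n : ℕ} (τ : Seg n) (x : Fin n → H) :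
    hnorm2 (fun i => x i - Seg.proj τ x i) = hnorm2 x - hnorm2 (Seg.proj τ x) := by
  rw [hnorm2_sub_expand, hinner_self_proj]
  ring

/-- orthogonality: `⟨x − Πx, Πy⟩ = 0` -/
lemma hinner_sub_proj {n : ℕ} (τ : Seg n) (x y : Fin n → H) :
    hinner (fun i => x i - Seg.proj τ x i) (Seg.proj τ y) = 0 := by
  rw [Seg.hinner_proj_right]
  refine Finset.sum_eq_zero fun ℓ hℓ => ?_
  rw [Finset.mem_range] at hℓ
  rw [Finset.sum_sub_distrib, τ.sum_proj_seg x hℓ, sub_self, inner_zero_left, mul_zero]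

end Part2
section Part3

open Finset RealInnerProductSpace

variable {n : ℕ} {H : Type*} [NormedAddCommGroup H] [InnerProductSpace ℝ H]

lemma Seg.t_interior (τ : Seg n) {ℓ : ℕ} (h0 : 0 < ℓ) (hD : ℓ < τ.D) :
    0 < τ.t ℓ ∧ τ.t ℓ < n := by
  constructor
  · have := τ.t_lt_t h0 (le_of_lt hD); rw [τ.h0] at this; omega
  · have := τ.t_lt_t hD le_rfl; rw [τ.hn] at this; omega

lemma jumpAt_nonneg (τ : Seg n) (m : Fin n → H) (ℓ : ℕ) : 0 ≤ jumpAt τ m ℓ := by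
  unfold jumpAt; split_ifs
  exacts [norm_nonneg _, le_rfl]

lemma deltaMax_nonneg (τ : Seg n) (m : Fin n → H) : 0 ≤ deltaMax τ m := by
  unfold deltaMax; split_ifs with h
  · exact le_trans (jumpAt_nonneg τ m 1)
      (Finset.le_sup' _ (Finset.mem_Ioo.mpr ⟨Nat.one_pos, by omega⟩))
  · exact le_rfl

lemma jumpAt_le_deltaMax (τ : Seg n) (m : Fin n → H) (hD : 2 ≤ τ.D) {ℓ : ℕ}
    (h0 : 0 < ℓ) (hℓ : ℓ < τ.D) : jumpAt τ m ℓ ≤ deltaMax τ m := by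
  unfold deltaMax; rw [dif_pos hD]
  exact Finset.le_sup' _ (Finset.mem_Ioo.mpr ⟨h0, hℓ⟩)

lemma deltaMin_le_jumpAt (τ : Seg n) (m : Fin n → H) (hD : 2 ≤ τ.D) {ℓ : ℕ}
    (h0 : 0 < ℓ) (hℓ : ℓ < τ.D) : deltaMin τ m ≤ jumpAt τ m ℓ := by
  unfold deltaMin; rw [dif_pos hD]
  exact Finset.inf'_le _ (Finset.mem_Ioo.mpr ⟨h0, hℓ⟩)

lemma deltaMin_pos (τ : Seg n) (m : Fin n → H) (hτ : IsTrueSeg τ m) (hD : 2 ≤ τ.D) :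
    0 < deltaMin τ m := by
  unfold deltaMin; rw [dif_pos hD]
  apply (Finset.lt_inf'_iff ..).2
  intro ℓ hℓ
  rw [Finset.mem_Ioo] at hℓ
  obtain ⟨h1, h2⟩ := τ.t_interior hℓ.1 hℓ.2
  unfold jumpAt
  rw [dif_pos ⟨h1, h2⟩]
  rw [norm_sub_pos_iff]
  exact fun hcon => hτ.2 ℓ hℓ.1 hℓ.2 (by omega) h2 hcon.symm

lemma deltaMin_le_deltaMax (τ : Seg n) (m : Fin n → H) (hD : 2 ≤ τ.D) :
    deltaMin τ m ≤ deltaMax τ m :=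
  le_trans (deltaMin_le_jumpAt τ m hD Nat.one_pos (by omega))
    (jumpAt_le_deltaMax τ m hD Nat.one_pos (by omega))

/-- chain bound: values of a piecewise-constant function are within `ℓ·Δ̄` of the first value -/
lemma jump_chain (τ : Seg n) (m : Fin n → H) (hτ : IsTrueSeg τ m) (hn0 : 0 < n) :
    ∀ ℓ, ℓ < τ.D → ∀ i ∈ τ.seg ℓ, ‖m i - m ⟨0, hn0⟩‖ ≤ (ℓ : ℝ) * deltaMax τ m := by
  intro ℓ
  induction ℓ with
  | zero =>
    intro h i hi
    have h0m : (⟨0, hn0⟩ : Fin n) ∈ τ.seg 0 := by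
      rw [Seg.mem_seg]
      refine ⟨by rw [τ.h0], ?_⟩
      have := τ.hmono 0 h
      simp only [Fin.val_mk]
      omega
    rw [hτ.1 0 h i hi ⟨0, hn0⟩ h0m]
    simp
  | succ ℓ ih =>
    intro h i hi
    have hD2 : 2 ≤ τ.D := by omega
    obtain ⟨hc0, hcn⟩ := τ.t_interior (by omega) h
    have hcm : (⟨τ.t (ℓ+1), hcn⟩ : Fin n) ∈ τ.seg (ℓ+1) := by
      rw [Seg.mem_seg]
      exact ⟨le_rfl, τ.hmono (ℓ+1) h⟩
    have hcm' : (⟨τ.t (ℓ+1) - 1, by omega⟩ : Fin n) ∈ τ.seg ℓ := by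
      rw [Seg.mem_seg]
      have := τ.hmono ℓ (by omega)
      simp only [Fin.val_mk]
      omega
    have e1 : m i = m ⟨τ.t (ℓ+1), hcn⟩ := hτ.1 (ℓ+1) h i hi _ hcm
    have e2 : ‖m ⟨τ.t (ℓ+1), hcn⟩ - m ⟨τ.t (ℓ+1) - 1, by omega⟩‖ = jumpAt τ m (ℓ+1) := by
      unfold jumpAt
      rw [dif_pos ⟨hc0, hcn⟩]
    have e3 := jumpAt_le_deltaMax τ m hD2 (by omega) h
    have e4 := ih (by omega) _ hcm'
    calc ‖m i - m ⟨0, hn0⟩‖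
        = ‖(m ⟨τ.t (ℓ+1), hcn⟩ - m ⟨τ.t (ℓ+1) - 1, by omega⟩)
            + (m ⟨τ.t (ℓ+1) - 1, by omega⟩ - m ⟨0, hn0⟩)‖ := by rw [e1, sub_add_sub_cancel]
      _ ≤ ‖m ⟨τ.t (ℓ+1), hcn⟩ - m ⟨τ.t (ℓ+1) - 1, by omega⟩‖
            + ‖m ⟨τ.t (ℓ+1) - 1, by omega⟩ - m ⟨0, hn0⟩‖ := norm_add_le _ _
      _ ≤ deltaMax τ m + (ℓ : ℝ) * deltaMax τ m := add_le_add (e2 ▸ e3) e4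
      _ = ((ℓ + 1 : ℕ) : ℝ) * deltaMax τ m := by push_cast; ring

lemma norm_sub_first_le (τ : Seg n) (m : Fin n → H) (hτ : IsTrueSeg τ m) (hn0 : 0 < n)
    (i : Fin n) : ‖m i - m ⟨0, hn0⟩‖ ≤ ((τ.D : ℝ) - 1) * deltaMax τ m := by
  obtain ⟨ℓ, hℓ, h1, h2⟩ := τ.exists_seg i i.isLt
  refine le_trans (jump_chain τ m hτ hn0 ℓ hℓ i (Seg.mem_seg.mpr ⟨h1, h2⟩)) ?_
  have hcast : (ℓ : ℝ) ≤ (τ.D : ℝ) - 1 := by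
    have : (ℓ : ℝ) ≤ ((τ.D - 1 : ℕ) : ℝ) := by exact_mod_cast (by omega : ℓ ≤ τ.D - 1)
    have h2 : ((τ.D - 1 : ℕ) : ℝ) = (τ.D : ℝ) - 1 := by
      have := τ.hD; push_cast [Nat.cast_sub (by omega : 1 ≤ τ.D)]; ring
    linarith
  exact mul_le_mul_of_nonneg_right hcast (deltaMax_nonneg τ m)

lemma len_ge_of_lamMin {τ : Seg n} {δ : ℝ} (hn0 : 0 < n) (hδ : δ ≤ Seg.lamMin τ)
    {ℓ : ℕ} (hℓ : ℓ < τ.D) :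
    (n : ℝ) * δ ≤ ((τ.t (ℓ + 1) - τ.t ℓ : ℕ) : ℝ) := by
  unfold Seg.lamMin at hδ
  rw [le_div_iff₀ (by exact_mod_cast hn0)] at hδ
  have h2 : ((Finset.range τ.D).inf' (Finset.nonempty_range_iff.mpr τ.hD.ne')
      fun ℓ => τ.t (ℓ + 1) - τ.t ℓ) ≤ τ.t (ℓ + 1) - τ.t ℓ :=
    Finset.inf'_le _ (Finset.mem_range.mpr hℓ)
  have h3 : (((Finset.range τ.D).inf' (Finset.nonempty_range_iff.mpr τ.hD.ne')
      fun ℓ => τ.t (ℓ + 1) - τ.t ℓ : ℕ) : ℝ) ≤ ((τ.t (ℓ + 1) - τ.t ℓ : ℕ) : ℝ) := by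
    exact_mod_cast h2
  linarith [mul_comm δ (n : ℝ)]

/-- norm of a segment sum of `e` is at most `2M` -/
lemma seg_sum_norm_le (τ : Seg n) (e : Fin n → H) (M : ℝ)
    (hM : ∀ k ≤ n, ‖Seg.psum e k‖ ≤ M) {ℓ : ℕ} (hℓ : ℓ < τ.D) :
    ‖∑ j ∈ τ.seg ℓ, e j‖ ≤ 2 * M := by
  rw [τ.sum_seg_eq_psum e hℓ]
  refine le_trans (norm_sub_le _ _) ?_
  have h1 := hM (τ.t (ℓ + 1)) (τ.t_le_n (by omega))
  have h2 := hM (τ.t ℓ) (τ.t_le_n (by omega))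
  linarith

end Part3
section Part4

open Finset RealInnerProductSpace

variable {n : ℕ} {H : Type*} [NormedAddCommGroup H] [InnerProductSpace ℝ H]

/-- bound for `|⟨Π_τ w, e⟩|` when `‖w i‖ ≤ W` -/
lemma hinner_proj_bound (τ : Seg n) (w e : Fin n → H) (W M : ℝ)
    (hW : ∀ i, ‖w i‖ ≤ W) (hM : ∀ k ≤ n, ‖Seg.psum e k‖ ≤ M) :
    |hinner (Seg.proj τ w) e| ≤ (τ.D : ℝ) * (W * (2 * M)) := by
  rw [Seg.hinner_proj_left]
  refine le_trans (Finset.abs_sum_le_sum_abs _ _) ?_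
  have hbound : ∀ ℓ ∈ Finset.range τ.D,
      |(((τ.t (ℓ + 1) - τ.t ℓ : ℕ) : ℝ))⁻¹ * ⟪∑ j ∈ τ.seg ℓ, w j, ∑ j ∈ τ.seg ℓ, e j⟫|
        ≤ W * (2 * M) := by
    intro ℓ hℓ
    rw [Finset.mem_range] at hℓ
    have hlen : (0 : ℝ) < ((τ.t (ℓ + 1) - τ.t ℓ : ℕ) : ℝ) := by
      have := τ.hmono ℓ hℓ
      exact_mod_cast (by omega : 0 < τ.t (ℓ + 1) - τ.t ℓ)
    have hw : ‖∑ j ∈ τ.seg ℓ, w j‖ ≤ ((τ.t (ℓ + 1) - τ.t ℓ : ℕ) : ℝ) * W := by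
      refine le_trans (norm_sum_le _ _) ?_
      have := Finset.sum_le_card_nsmul (τ.seg ℓ) (fun j => ‖w j‖) W (fun j _ => hW j)
      rwa [τ.card_seg hℓ, nsmul_eq_mul] at this
    have he : ‖∑ j ∈ τ.seg ℓ, e j‖ ≤ 2 * M := seg_sum_norm_le τ e M hM hℓ
    have hWnn : 0 ≤ W := le_trans (norm_nonneg (w ⟨0, by
      have h1 := τ.hmono ℓ hℓ
      have h2 := τ.t_le_n (show ℓ + 1 ≤ τ.D by omega)
      omega⟩)) (hW _)
    have hMnn : 0 ≤ 2 * M := le_trans (norm_nonneg _) he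
    rw [abs_mul, abs_inv, abs_of_pos hlen]
    calc ((τ.t (ℓ + 1) - τ.t ℓ : ℕ) : ℝ)⁻¹ * |⟪∑ j ∈ τ.seg ℓ, w j, ∑ j ∈ τ.seg ℓ, e j⟫|
        ≤ ((τ.t (ℓ + 1) - τ.t ℓ : ℕ) : ℝ)⁻¹ *
            ((((τ.t (ℓ + 1) - τ.t ℓ : ℕ) : ℝ) * W) * (2 * M)) := by
          refine mul_le_mul_of_nonneg_left ?_ (by positivity)
          exact le_trans (abs_real_inner_le_norm _ _)
            (mul_le_mul hw he (norm_nonneg _) (by positivity))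
      _ = (((τ.t (ℓ + 1) - τ.t ℓ : ℕ) : ℝ)⁻¹ * ((τ.t (ℓ + 1) - τ.t ℓ : ℕ) : ℝ))
            * (W * (2 * M)) := by ring
      _ = W * (2 * M) := by rw [inv_mul_cancel₀ (ne_of_gt hlen), one_mul]
  refine le_trans (Finset.sum_le_card_nsmul _ _ _ hbound) ?_
  rw [Finset.card_range, nsmul_eq_mul]

/-- bound for `|⟨w, e⟩|` when `w` is constant on segments of `τ` and `‖w i‖ ≤ W` -/
lemma hinner_pc_bound (τ : Seg n) (w e : Fin n → H) (W M : ℝ)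
    (hconst : ∀ ℓ < τ.D, ∀ i ∈ τ.seg ℓ, ∀ j ∈ τ.seg ℓ, w i = w j)
    (hW : ∀ i, ‖w i‖ ≤ W) (hM : ∀ k ≤ n, ‖Seg.psum e k‖ ≤ M)
    (hMnn : 0 ≤ M) (hWnn : 0 ≤ W) :
    |hinner w e| ≤ (τ.D : ℝ) * (W * (2 * M)) := by
  rw [hinner, τ.sum_segs]
  refine le_trans (Finset.abs_sum_le_sum_abs _ _) ?_
  have hbound : ∀ ℓ ∈ Finset.range τ.D,
      |∑ i ∈ τ.seg ℓ, (⟪w i, e i⟫ : ℝ)| ≤ W * (2 * M) := by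
    intro ℓ hℓ
    rw [Finset.mem_range] at hℓ
    have hℓn : τ.t ℓ < n := by
      have h1 := τ.hmono ℓ hℓ
      have h2 := τ.t_le_n (show ℓ + 1 ≤ τ.D by omega)
      omega
    have hv : (⟨τ.t ℓ, hℓn⟩ : Fin n) ∈ τ.seg ℓ := by
      rw [Seg.mem_seg]
      exact ⟨le_rfl, τ.hmono ℓ hℓ⟩
    have hrw : ∑ i ∈ τ.seg ℓ, (⟪w i, e i⟫ : ℝ) = ⟪w ⟨τ.t ℓ, hℓn⟩, ∑ i ∈ τ.seg ℓ, e i⟫ := by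
      rw [inner_sum]
      exact Finset.sum_congr rfl fun i hi => by
        rw [hconst ℓ hℓ i hi _ hv]
    rw [hrw]
    exact le_trans (abs_real_inner_le_norm _ _)
      (mul_le_mul (hW _) (seg_sum_norm_le τ e M hM hℓ) (norm_nonneg _) hWnn)
  refine le_trans (Finset.sum_le_card_nsmul _ _ _ hbound) ?_
  rw [Finset.card_range, nsmul_eq_mul]

/-- the main upper bound on the projected mean difference -/
lemma upper_bound (hn0 : 0 < n) (μ e : Fin n → H)
    (τs τh : Seg n) (hτ : IsTrueSeg τs μ) (hDs : 2 ≤ τs.D) (hDh : τh.D = τs.D)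
    (M : ℝ) (hM : ∀ k ≤ n, ‖Seg.psum e k‖ ≤ M)
    (δ : ℝ) (hδ : 0 < δ) (hδh : δ ≤ Seg.lamMin τh)
    (hmin : hnorm2 (fun i => (μ i + e i) - Seg.proj τh (fun j => μ j + e j) i)
          ≤ hnorm2 (fun i => (μ i + e i) - Seg.proj τs (fun j => μ j + e j) i)) :
    hnorm2 (fun i => μ i - Seg.proj τh μ i)
      ≤ 8 * (τs.D : ℝ) ^ 2 * deltaMax τs μ * M + (τs.D : ℝ) * (2 * M) ^ 2 / ((n : ℝ) * δ) := by
  have hMnn : 0 ≤ M := le_trans (norm_nonneg _) (hM 0 (by omega))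
  set u : Fin n → H := fun i => μ i - Seg.proj τh μ i with hu
  set v : Fin n → H := fun i => e i - Seg.proj τh e i with hv
  -- rewrite minimality
  have hYh : (fun i => (μ i + e i) - Seg.proj τh (fun j => μ j + e j) i)
      = fun i => u i + v i := by
    funext i
    simp only [hu, hv, Seg.proj_add τh μ e i]
    abel
  have hYs : (fun i => (μ i + e i) - Seg.proj τs (fun j => μ j + e j) i)
      = fun i => e i - Seg.proj τs e i := by
    funext i
    simp only [Seg.proj_add τs μ e i, τs.proj_fix μ hτ.1 i]
    abel
  rw [hYh, hYs] at hmin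
  have hexp : hnorm2 (fun i => u i + v i) = hnorm2 u + 2 * hinner u v + hnorm2 v :=
    hnorm2_add_expand u v
  have hcross : hinner u v = hinner u e - 0 := by
    rw [hv]
    have : hinner u (fun i => e i - Seg.proj τh e i)
        = hinner u e - hinner u (Seg.proj τh e) := by
      rw [hinner_comm, hinner_sub_left, hinner_comm e u, hinner_comm (Seg.proj τh e) u]
    rw [this, hinner_sub_proj τh μ e]
  have hv2 : hnorm2 v = hnorm2 e - hnorm2 (Seg.proj τh e) := hnorm2_sub_proj τh e
  have hs2 : hnorm2 (fun i => e i - Seg.proj τs e i) = hnorm2 e - hnorm2 (Seg.proj τs e) :=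
    hnorm2_sub_proj τs e
  have hkey : hnorm2 u ≤ 2 * (- hinner u e) + hnorm2 (Seg.proj τh e) := by
    have h0 := hnorm2_nonneg (Seg.proj τs e)
    rw [hexp, hcross, hv2] at hmin
    rw [hs2] at hmin
    linarith
  -- bound the cross term
  set a : H := μ ⟨0, hn0⟩ with ha
  set w : Fin n → H := fun i => μ i - a with hw
  have hWbd : ∀ i, ‖w i‖ ≤ ((τs.D : ℝ) - 1) * deltaMax τs μ :=
    fun i => norm_sub_first_le τs μ hτ hn0 i
  set W : ℝ := ((τs.D : ℝ) - 1) * deltaMax τs μ with hWdef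
  have hWnn : 0 ≤ W := le_trans (norm_nonneg (w ⟨0, hn0⟩)) (hWbd _)
  have hproj_w : ∀ i, Seg.proj τh μ i = Seg.proj τh w i + a := by
    intro i
    have : Seg.proj τh (fun j => w j + a) i = Seg.proj τh w i + Seg.proj τh (fun _ => a) i :=
      Seg.proj_add τh w (fun _ => a) i
    rw [τh.proj_const a i] at this
    have hμ : μ = fun j => w j + a := by funext j; simp [hw]
    rw [hμ]
    exact this
  have hcross_eq : - hinner u e = hinner (Seg.proj τh w) e - hinner w e := by
    have h1 : hinner u e = hinner μ e - hinner (Seg.proj τh μ) e := by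
      rw [hu, hinner_sub_left]
    have h2 : hinner (Seg.proj τh μ) e
        = hinner (Seg.proj τh w) e + hinner (fun _ : Fin n => a) e := by
      rw [← hinner_add_left]
      congr 1
      funext i
      exact hproj_w i
    have h3 : hinner μ e = hinner w e + hinner (fun _ : Fin n => a) e := by
      rw [← hinner_add_left]
      congr 1
      funext i
      simp [hw]
    rw [h1, h2, h3]
    ring
  have hb1 : |hinner (Seg.proj τh w) e| ≤ (τs.D : ℝ) * (W * (2 * M)) := by
    have := hinner_proj_bound τh w e W M hWbd hM
    rwa [hDh] at this
  have hb2 : |hinner w e| ≤ (τs.D : ℝ) * (W * (2 * M)) := by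
    refine hinner_pc_bound τs w e W M ?_ hWbd hM hMnn hWnn
    intro ℓ hℓ i hi j hj
    simp only [hw]
    rw [hτ.1 ℓ hℓ i hi j hj]
  -- bound the projected noise
  have hb3 : hnorm2 (Seg.proj τh e) ≤ (τs.D : ℝ) * (2 * M) ^ 2 / ((n : ℝ) * δ) := by
    rw [hnorm2_proj_eq]
    have hbound : ∀ ℓ ∈ Finset.range τh.D,
        (((τh.t (ℓ + 1) - τh.t ℓ : ℕ) : ℝ))⁻¹ * ‖∑ j ∈ τh.seg ℓ, e j‖ ^ 2
          ≤ (2 * M) ^ 2 / ((n : ℝ) * δ) := by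
      intro ℓ hℓ
      rw [Finset.mem_range] at hℓ
      have hlen := len_ge_of_lamMin hn0 hδh hℓ
      have hnδ : (0 : ℝ) < (n : ℝ) * δ := by positivity
      have hinv : (((τh.t (ℓ + 1) - τh.t ℓ : ℕ) : ℝ))⁻¹ ≤ ((n : ℝ) * δ)⁻¹ :=
        inv_anti₀ hnδ hlen
      have hsq : ‖∑ j ∈ τh.seg ℓ, e j‖ ^ 2 ≤ (2 * M) ^ 2 := by
        have := seg_sum_norm_le τh e M hM hℓ
        nlinarith [norm_nonneg (∑ j ∈ τh.seg ℓ, e j)]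
      calc (((τh.t (ℓ + 1) - τh.t ℓ : ℕ) : ℝ))⁻¹ * ‖∑ j ∈ τh.seg ℓ, e j‖ ^ 2
          ≤ ((n : ℝ) * δ)⁻¹ * (2 * M) ^ 2 := by
            refine mul_le_mul hinv hsq (by positivity) (by positivity)
        _ = (2 * M) ^ 2 / ((n : ℝ) * δ) := by ring
    refine le_trans (Finset.sum_le_card_nsmul _ _ _ hbound) ?_
    rw [Finset.card_range, nsmul_eq_mul, hDh]
    exact le_of_eq (by ring)
  -- combine
  have hdm := deltaMax_nonneg τs μ
  have hDnn : (0 : ℝ) ≤ (τs.D : ℝ) := Nat.cast_nonneg _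
  have hWD : (τs.D : ℝ) * W ≤ (τs.D : ℝ) ^ 2 * deltaMax τs μ := by
    rw [hWdef, ← mul_assoc]
    refine mul_le_mul_of_nonneg_right ?_ hdm
    have hq : (τs.D : ℝ) * ((τs.D : ℝ) - 1) = (τs.D : ℝ) ^ 2 - (τs.D : ℝ) := by ring
    rw [hq]
    linarith
  have hb1' := (abs_le.mp hb1).2
  have hb2' := (abs_le.mp hb2).1
  have hfin : hnorm2 u ≤ 4 * ((τs.D : ℝ) * (W * (2 * M))) + (τs.D : ℝ) * (2 * M) ^ 2 / ((n : ℝ) * δ) := by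
    have h := hkey
    rw [hcross_eq] at h
    linarith [hb3]
  refine le_trans hfin (add_le_add ?_ le_rfl)
  have hq : 4 * ((τs.D : ℝ) * (W * (2 * M))) = 8 * ((τs.D : ℝ) * W) * M := by ring
  rw [hq]
  have h8 : 8 * ((τs.D : ℝ) * W) ≤ 8 * ((τs.D : ℝ) ^ 2 * deltaMax τs μ) :=
    mul_le_mul_of_nonneg_left hWD (by norm_num)
  have := mul_le_mul_of_nonneg_right h8 hMnn
  calc 8 * ((τs.D : ℝ) * W) * M ≤ 8 * ((τs.D : ℝ) ^ 2 * deltaMax τs μ) * M := this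
    _ = 8 * (τs.D : ℝ) ^ 2 * deltaMax τs μ * M := by ring

end Part4
section Part5

open Finset RealInnerProductSpace

variable {n : ℕ} {H : Type*} [NormedAddCommGroup H] [InnerProductSpace ℝ H]

lemma add_sq_le_two_mul (x y : ℝ) : (x + y) ^ 2 ≤ 2 * (x ^ 2 + y ^ 2) := by
  nlinarith [sq_nonneg (x - y)]

lemma lower_bound (hn0 : 0 < n) (μ : Fin n → H) (τs τh : Seg n)
    (hτ : IsTrueSeg τs μ) (hDs : 2 ≤ τs.D) (hDh : τh.D = τs.D)
    (Ls : ℕ) (hLs : ∀ ℓ < τs.D, Ls ≤ τs.t (ℓ + 1) - τs.t ℓ) :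
    ((min (Seg.dinf1 τs τh) Ls : ℕ) : ℝ) * (deltaMin τs μ) ^ 2 / 2
      ≤ hnorm2 (fun i => μ i - Seg.proj τh μ i) := by
  set m : ℕ := min (Seg.dinf1 τs τh) Ls with hm
  rcases Nat.eq_zero_or_pos m with hm0 | hm1
  · rw [hm0]
    simpa using hnorm2_nonneg (fun i => μ i - Seg.proj τh μ i)
  -- the sup is attained
  have hcond : 2 ≤ τs.D ∧ 2 ≤ τh.D := ⟨hDs, by omega⟩
  have hne : (Finset.Ioo 0 τs.D).Nonempty := ⟨1, Finset.mem_Ioo.mpr ⟨Nat.one_pos, by omega⟩⟩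
  obtain ⟨is, hismem, hsup⟩ := Finset.exists_mem_eq_sup (Finset.Ioo 0 τs.D) hne
    (fun i => (Finset.Ioo 0 τh.D).inf'
      ⟨1, Finset.mem_Ioo.mpr ⟨Nat.one_pos, by omega⟩⟩
      fun j => Nat.dist (τs.t i) (τh.t j))
  have hdinf : Seg.dinf1 τs τh = (Finset.Ioo 0 τh.D).inf'
      ⟨1, Finset.mem_Ioo.mpr ⟨Nat.one_pos, by omega⟩⟩
      (fun j => Nat.dist (τs.t is) (τh.t j)) := by
    rw [Seg.dinf1, dif_pos hcond]
    exact hsup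
  rw [Finset.mem_Ioo] at hismem
  obtain ⟨his0, hisD⟩ := hismem
  have hdle : ∀ j, 0 < j → j < τh.D → Seg.dinf1 τs τh ≤ Nat.dist (τs.t is) (τh.t j) := by
    intro j hj0 hjD
    rw [hdinf]
    exact Finset.inf'_le _ (Finset.mem_Ioo.mpr ⟨hj0, hjD⟩)
  set c : ℕ := τs.t is with hc
  obtain ⟨hc0, hcn⟩ := τs.t_interior his0 hisD
  obtain ⟨ℓh, hℓh, hch1, hch2⟩ := τh.exists_seg c hcn
  have hmd : m ≤ Seg.dinf1 τs τh := Nat.min_le_left _ _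
  have hmL : m ≤ Ls := Nat.min_le_right _ _
  -- position facts
  have hLs1 : Ls ≤ τs.t 1 - τs.t 0 := hLs 0 (by omega)
  have ht0 : τs.t 0 = 0 := τs.h0
  have ht1c : τs.t 1 ≤ c := τs.t_le_t his0 (le_of_lt hisD)
  have hLlast : Ls ≤ τs.t τs.D - τs.t (τs.D - 1) := by
    have := hLs (τs.D - 1) (by omega)
    have hid : τs.D - 1 + 1 = τs.D := by omega
    rwa [hid] at this
  have htlast : c ≤ τs.t (τs.D - 1) := τs.t_le_t (by omega) (by omega)
  have htDn : τs.t τs.D = n := τs.hn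
  have pos1 : τh.t ℓh + m ≤ c := by
    rcases Nat.eq_zero_or_pos ℓh with h0 | h0
    · rw [h0, τh.h0]; omega
    · have := hdle ℓh h0 hℓh
      rw [Nat.dist_comm, Nat.dist_eq_sub_of_le hch1] at this
      omega
  have pos2 : c + m ≤ τh.t (ℓh + 1) := by
    rcases Nat.lt_or_ge (ℓh + 1) τh.D with h1 | h1
    · have := hdle (ℓh + 1) (Nat.succ_pos ℓh) h1
      rw [Nat.dist_eq_sub_of_le (le_of_lt hch2)] at this
      omega
    · have hend : ℓh + 1 = τh.D := by omega
      rw [hend, τh.hn]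
      omega
  have pos3 : τs.t (is - 1) + m ≤ c := by
    have := hLs (is - 1) (by omega)
    have hid : is - 1 + 1 = is := by omega
    rw [hid] at this
    have hmono := τs.t_le_t (show is - 1 ≤ is by omega) (le_of_lt hisD)
    omega
  have pos4 : c + m ≤ τs.t (is + 1) := by
    have := hLs is hisD
    have hmono := τs.t_le_t (show is ≤ is + 1 by omega) (by omega)
    omega
  have hcmn : c + m ≤ n := le_trans pos2 (τh.t_le_n (by omega))
  -- runs
  set Lrun : Finset (Fin n) :=
    Finset.univ.filter (fun j : Fin n => c - m ≤ (j : ℕ) ∧ (j : ℕ) < c) with hLrun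
  set Rrun : Finset (Fin n) :=
    Finset.univ.filter (fun j : Fin n => c ≤ (j : ℕ) ∧ (j : ℕ) < c + m) with hRrun
  have hcardL : Lrun.card = m := by
    rw [hLrun, Seg.card_filter_Ico (le_of_lt hcn)]
    omega
  have hcardR : Rrun.card = m := by
    rw [hRrun, Seg.card_filter_Ico hcmn]
    omega
  have hdisj : Disjoint Lrun Rrun := by
    rw [Finset.disjoint_left]
    intro j hjL hjR
    rw [hLrun, Finset.mem_filter] at hjL
    rw [hRrun, Finset.mem_filter] at hjR
    omega
  set a : H := μ ⟨c - 1, by omega⟩ with hadef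
  set b : H := μ ⟨c, hcn⟩ with hbdef
  have hseg_prev : ∀ j ∈ Lrun, j ∈ τs.seg (is - 1) := by
    intro j hj
    rw [hLrun, Finset.mem_filter] at hj
    rw [Seg.mem_seg]
    have hid : is - 1 + 1 = is := by omega
    rw [hid]
    omega
  have hvalL : ∀ j ∈ Lrun, μ j = a := by
    intro j hj
    have hmem : (⟨c - 1, by omega⟩ : Fin n) ∈ τs.seg (is - 1) := by
      rw [Seg.mem_seg]
      have hid : is - 1 + 1 = is := by omega
      rw [hid]
      have hmono := τs.t_le_t (show is - 1 ≤ is by omega) (le_of_lt hisD)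
      simp only [Fin.val_mk]
      omega
    exact hτ.1 (is - 1) (by omega) j (hseg_prev j hj) _ hmem
  have hvalR : ∀ j ∈ Rrun, μ j = b := by
    intro j hj
    rw [hRrun, Finset.mem_filter] at hj
    have hjmem : j ∈ τs.seg is := by
      rw [Seg.mem_seg]
      omega
    have hmem : (⟨c, hcn⟩ : Fin n) ∈ τs.seg is := by
      rw [Seg.mem_seg]
      have := τs.hmono is hisD
      simp only [Fin.val_mk]
      omega
    exact hτ.1 is hisD j hjmem _ hmem
  -- projection is constant on the union
  set cc : H := (((τh.t (ℓh + 1) - τh.t ℓh : ℕ) : ℝ))⁻¹ • ∑ j ∈ τh.seg ℓh, μ j with hcc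
  have hprojc : ∀ j ∈ Lrun ∪ Rrun, Seg.proj τh μ j = cc := by
    intro j hj
    refine τh.proj_eq_on_seg μ hℓh ?_
    rw [Seg.mem_seg]
    rw [Finset.mem_union] at hj
    rcases hj with hj | hj
    · rw [hLrun, Finset.mem_filter] at hj; omega
    · rw [hRrun, Finset.mem_filter] at hj; omega
  -- lower bound chain
  have hsum : ((m : ℝ)) * ‖a - cc‖ ^ 2 + ((m : ℝ)) * ‖b - cc‖ ^ 2
      ≤ hnorm2 (fun i => μ i - Seg.proj τh μ i) := by
    have hsubset : Lrun ∪ Rrun ⊆ Finset.univ := Finset.subset_univ _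
    have h1 : ∑ j ∈ Lrun ∪ Rrun, ‖μ j - Seg.proj τh μ j‖ ^ 2
        ≤ hnorm2 (fun i => μ i - Seg.proj τh μ i) := by
      unfold hnorm2
      exact Finset.sum_le_sum_of_subset_of_nonneg hsubset fun i _ _ => sq_nonneg _
    rw [Finset.sum_union hdisj] at h1
    have hL : ∑ j ∈ Lrun, ‖μ j - Seg.proj τh μ j‖ ^ 2 = (m : ℝ) * ‖a - cc‖ ^ 2 := by
      rw [Finset.sum_congr rfl fun j hj => by
        rw [hvalL j hj, hprojc j (Finset.mem_union_left _ hj)]]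
      rw [Finset.sum_const, hcardL, nsmul_eq_mul]
    have hR : ∑ j ∈ Rrun, ‖μ j - Seg.proj τh μ j‖ ^ 2 = (m : ℝ) * ‖b - cc‖ ^ 2 := by
      rw [Finset.sum_congr rfl fun j hj => by
        rw [hvalR j hj, hprojc j (Finset.mem_union_right _ hj)]]
      rw [Finset.sum_const, hcardR, nsmul_eq_mul]
    rw [hL, hR] at h1
    exact h1
  -- jump size
  have hjump : deltaMin τs μ ≤ ‖b - a‖ := by
    have h1 := deltaMin_le_jumpAt τs μ hDs his0 hisD
    have h2 : jumpAt τs μ is = ‖b - a‖ := by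
      unfold jumpAt
      rw [dif_pos ⟨hc0, hcn⟩]
    rwa [h2] at h1
  have hdmnn : 0 ≤ deltaMin τs μ := le_of_lt (deltaMin_pos τs μ hτ hDs)
  have htri : ‖b - a‖ ≤ ‖a - cc‖ + ‖b - cc‖ := by
    have : b - a = (b - cc) - (a - cc) := by abel
    rw [this]
    exact le_trans (norm_sub_le _ _) (by rw [add_comm])
  have hmnn : (0 : ℝ) ≤ (m : ℝ) := Nat.cast_nonneg _
  refine le_trans ?_ hsum
  have hsq : (deltaMin τs μ) ^ 2 / 2 ≤ ‖a - cc‖ ^ 2 + ‖b - cc‖ ^ 2 := by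
    have h2 := pow_le_pow_left₀ hdmnn (le_trans hjump htri) 2
    have h3 := add_sq_le_two_mul ‖a - cc‖ ‖b - cc‖
    linarith
  calc ((m : ℕ) : ℝ) * (deltaMin τs μ) ^ 2 / 2
      = (m : ℝ) * ((deltaMin τs μ) ^ 2 / 2) := by ring
    _ ≤ (m : ℝ) * (‖a - cc‖ ^ 2 + ‖b - cc‖ ^ 2) := mul_le_mul_of_nonneg_left hsq hmnn
    _ = (m : ℝ) * ‖a - cc‖ ^ 2 + (m : ℝ) * ‖b - cc‖ ^ 2 := by ring

end Part5
section Part6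

open MeasureTheory ProbabilityTheory RealInnerProductSpace

variable {Ω : Type*} [MeasurableSpace Ω] {P : Measure Ω} [IsProbabilityMeasure P]
  {H : Type*} [NormedAddCommGroup H] [InnerProductSpace ℝ H] [CompleteSpace H]
  [SecondCountableTopology H] [MeasurableSpace H] [BorelSpace H]

lemma indep_integral_inner {X Z : Ω → H} (h : IndepFun X Z P)
    (hXm : Measurable X) (hZm : Measurable Z)
    (hX : Integrable X P) (hZ : Integrable Z P) :
    ∫ ω, ⟪X ω, Z ω⟫ ∂P = ⟪∫ ω, X ω ∂P, ∫ ω, Z ω ∂P⟫ := by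
  have hmap : P.map (fun ω => (X ω, Z ω)) = (P.map X).prod (P.map Z) :=
    (ProbabilityTheory.indepFun_iff_map_prod_eq_prod_map_map
      hXm.aemeasurable hZm.aemeasurable).mp h
  have hcont : Continuous fun p : H × H => ⟪p.1, p.2⟫ := continuous_inner
  haveI h1 : IsProbabilityMeasure (P.map X) := Measure.isProbabilityMeasure_map hXm.aemeasurable
  haveI h2 : IsProbabilityMeasure (P.map Z) := Measure.isProbabilityMeasure_map hZm.aemeasurable
  have hIX : Integrable (fun x : H => x) (P.map X) :=
    (integrable_map_measure aestronglyMeasurable_id hXm.aemeasurable).mpr hX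
  have hIZ : Integrable (fun x : H => x) (P.map Z) :=
    (integrable_map_measure aestronglyMeasurable_id hZm.aemeasurable).mpr hZ
  have hintprod : Integrable (fun p : H × H => ⟪p.1, p.2⟫) ((P.map X).prod (P.map Z)) := by
    have hnormint : Integrable (fun p : H × H => ‖p.1‖ * ‖p.2‖) ((P.map X).prod (P.map Z)) :=
      Integrable.mul_prod hIX.norm hIZ.norm
    refine hnormint.mono' hcont.aestronglyMeasurable (Filter.Eventually.of_forall fun p => ?_)
    rw [Real.norm_eq_abs]
    exact abs_real_inner_le_norm p.1 p.2
  calc ∫ ω, ⟪X ω, Z ω⟫ ∂P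
      = ∫ p, (⟪p.1, p.2⟫ : ℝ) ∂(P.map (fun ω => (X ω, Z ω))) := by
        rw [integral_map (hXm.prodMk hZm).aemeasurable hcont.aestronglyMeasurable]
    _ = ∫ p, (⟪p.1, p.2⟫ : ℝ) ∂((P.map X).prod (P.map Z)) := by rw [hmap]
    _ = ∫ x, ∫ z, (⟪x, z⟫ : ℝ) ∂(P.map Z) ∂(P.map X) := integral_prod _ hintprod
    _ = ∫ x, (⟪x, ∫ z, z ∂(P.map Z)⟫ : ℝ) ∂(P.map X) := by
        refine integral_congr_ae (Filter.Eventually.of_forall fun x => ?_)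
        exact integral_inner hIZ x
    _ = ⟪∫ x, x ∂(P.map X), ∫ z, z ∂(P.map Z)⟫ := by
        rw [show (fun x : H => (⟪x, ∫ z, z ∂(P.map Z)⟫ : ℝ))
            = fun x : H => (⟪∫ z, z ∂(P.map Z), x⟫ : ℝ) from
          funext fun x => real_inner_comm _ _]
        rw [integral_inner hIX]
        exact real_inner_comm _ _
    _ = ⟪∫ ω, X ω ∂P, ∫ ω, Z ω ∂P⟫ := by
        have eX : ∫ x, x ∂(P.map X) = ∫ ω, X ω ∂P := by
          simpa using integral_map (f := fun x : H => x) hXm.aemeasurable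
            aestronglyMeasurable_id
        have eZ : ∫ z, z ∂(P.map Z) = ∫ ω, Z ω ∂P := by
          simpa using integral_map (f := fun x : H => x) hZm.aemeasurable
            aestronglyMeasurable_id
        rw [eX, eZ]

end Part6
section Part7

open MeasureTheory ProbabilityTheory RealInnerProductSpace Finset

variable {Ω : Type*} [MeasurableSpace Ω] {P : Measure Ω} [IsProbabilityMeasure P]
  {H : Type*} [NormedAddCommGroup H] [InnerProductSpace ℝ H] [CompleteSpace H]
  [SecondCountableTopology H] [MeasurableSpace H] [BorelSpace H]

lemma inner_int_aux {u v : Ω → H} (hu : Measurable u) (hv : Measurable v)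
    (h2u : Integrable (fun ω => ‖u ω‖ ^ 2) P) (h2v : Integrable (fun ω => ‖v ω‖ ^ 2) P) :
    Integrable (fun ω => (⟪u ω, v ω⟫ : ℝ)) P := by
  refine (h2u.add h2v).mono' (hu.inner hv).aestronglyMeasurable
    (Filter.Eventually.of_forall fun ω => ?_)
  rw [Real.norm_eq_abs]
  simp only [Pi.add_apply]
  nlinarith [abs_real_inner_le_norm (u ω) (v ω), sq_nonneg (‖u ω‖ - ‖v ω‖),
    abs_nonneg (⟪u ω, v ω⟫ : ℝ)]

theorem kolmogorov_event {n : ℕ} (ε : Fin n → Ω → H)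
    (hmeas : ∀ i, Measurable (ε i))
    (hindep : iIndepFun ε P)
    (hint : ∀ i, Integrable (ε i) P)
    (hzero : ∀ i, ∫ ω, ε i ω ∂P = 0)
    (h2int : ∀ i, Integrable (fun ω => ‖ε i ω‖ ^ 2) P)
    (K : ℝ) (hK : ∀ i, ∫ ω, ‖ε i ω‖ ^ 2 ∂P ≤ K)
    (lam : ℝ) (hlam : 0 < lam) :
    ∃ E : Set Ω, MeasurableSet E ∧
      1 - (n : ℝ) * K / lam ^ 2 ≤ (P E).toReal ∧
      ∀ ω ∈ E, ∀ k ≤ n, ‖Seg.psum (fun i => ε i ω) k‖ ≤ lam := by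
  classical
  set S : ℕ → Ω → H := fun k ω =>
    ∑ j ∈ Finset.univ.filter (fun j : Fin n => (j : ℕ) < k), ε j ω with hSdef
  have hSpsum : ∀ k ω, Seg.psum (fun i => ε i ω) k = S k ω := fun k ω => rfl
  have hSmeas : ∀ k, Measurable (S k) := fun k =>
    Finset.measurable_sum _ fun j _ => hmeas j
  have hSint : ∀ k, Integrable (S k) P := fun k =>
    integrable_finset_sum _ fun j _ => hint j
  set g : Ω → ℝ := fun ω => ∑ j : Fin n, ‖ε j ω‖ ^ 2 with hgdef
  have hgint : Integrable g P := integrable_finset_sum _ fun j _ => h2int j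
  have hgnn : ∀ ω, 0 ≤ g ω := fun ω => Finset.sum_nonneg fun j _ => sq_nonneg _
  have hSbd : ∀ k ω, ‖S k ω‖ ^ 2 ≤ (n : ℝ) * g ω := by
    intro k ω
    have h1 : ‖S k ω‖ ≤ ∑ j ∈ Finset.univ.filter (fun j : Fin n => (j : ℕ) < k), ‖ε j ω‖ :=
      norm_sum_le _ _
    have h2 : (∑ j ∈ Finset.univ.filter (fun j : Fin n => (j : ℕ) < k), ‖ε j ω‖) ^ 2
        ≤ ((Finset.univ.filter (fun j : Fin n => (j : ℕ) < k)).card : ℝ)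
          * ∑ j ∈ Finset.univ.filter (fun j : Fin n => (j : ℕ) < k), ‖ε j ω‖ ^ 2 :=
      sq_sum_le_card_mul_sum_sq
    have h3 : ((Finset.univ.filter (fun j : Fin n => (j : ℕ) < k)).card : ℝ) ≤ (n : ℝ) := by
      have := Finset.card_filter_le (Finset.univ : Finset (Fin n))
        (fun j : Fin n => (j : ℕ) < k)
      have hcu : (Finset.univ : Finset (Fin n)).card = n := Finset.card_univ.trans (Fintype.card_fin n)
      exact_mod_cast (by omega : (Finset.univ.filter (fun j : Fin n => (j : ℕ) < k)).card ≤ n)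
    have h4 : ∑ j ∈ Finset.univ.filter (fun j : Fin n => (j : ℕ) < k), ‖ε j ω‖ ^ 2 ≤ g ω :=
      Finset.sum_le_sum_of_subset_of_nonneg (Finset.subset_univ _) fun j _ _ => sq_nonneg _
    have h5 : ‖S k ω‖ ^ 2 ≤ (∑ j ∈ Finset.univ.filter (fun j : Fin n => (j : ℕ) < k), ‖ε j ω‖) ^ 2 :=
      pow_le_pow_left₀ (norm_nonneg _) h1 2
    have h6 : (0 : ℝ) ≤ ∑ j ∈ Finset.univ.filter (fun j : Fin n => (j : ℕ) < k), ‖ε j ω‖ ^ 2 :=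
      Finset.sum_nonneg fun j _ => sq_nonneg _
    nlinarith
  have hSsqint : ∀ k, Integrable (fun ω => ‖S k ω‖ ^ 2) P := by
    intro k
    refine (hgint.const_mul (n : ℝ)).mono'
      (((hSmeas k).norm.pow_const 2).aestronglyMeasurable)
      (Filter.Eventually.of_forall fun ω => ?_)
    rw [Real.norm_eq_abs, abs_of_nonneg (sq_nonneg _)]
    exact hSbd k ω
  have hdiffsqint : ∀ k, Integrable (fun ω => ‖S n ω - S k ω‖ ^ 2) P := by
    intro k
    refine (((hSsqint n).add (hSsqint k)).const_mul 2).mono'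
      ((((hSmeas n).sub (hSmeas k)).norm.pow_const 2).aestronglyMeasurable)
      (Filter.Eventually.of_forall fun ω => ?_)
    rw [Real.norm_eq_abs, abs_of_nonneg (sq_nonneg _)]
    have h1 : ‖S n ω - S k ω‖ ≤ ‖S n ω‖ + ‖S k ω‖ := norm_sub_le _ _
    have h2 := pow_le_pow_left₀ (norm_nonneg _) h1 2
    have h3 := add_sq_le_two_mul ‖S n ω‖ ‖S k ω‖
    simp only [Pi.add_apply]
    linarith
  -- variance bound
  have hvarSn : ∫ ω, ‖S n ω‖ ^ 2 ∂P ≤ (n : ℝ) * K := by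
    have hfilter : Finset.univ.filter (fun j : Fin n => (j : ℕ) < n) = Finset.univ :=
      Finset.filter_true_of_mem fun j _ => j.isLt
    have hexp : ∀ ω, ‖S n ω‖ ^ 2 = ∑ i : Fin n, ∑ j : Fin n, (⟪ε i ω, ε j ω⟫ : ℝ) := by
      intro ω
      rw [hSdef]
      simp only [hfilter]
      rw [← real_inner_self_eq_norm_sq, sum_inner]
      exact Finset.sum_congr rfl fun i _ => inner_sum _ _ _
    have hiii : ∀ i j : Fin n, Integrable (fun ω => (⟪ε i ω, ε j ω⟫ : ℝ)) P :=
      fun i j => inner_int_aux (hmeas i) (hmeas j) (h2int i) (h2int j)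
    have h1 : ∫ ω, ‖S n ω‖ ^ 2 ∂P = ∑ i : Fin n, ∑ j : Fin n, ∫ ω, (⟪ε i ω, ε j ω⟫ : ℝ) ∂P := by
      rw [integral_congr_ae (Filter.Eventually.of_forall hexp),
        integral_finset_sum _ fun i _ => integrable_finset_sum _ fun j _ => hiii i j]
      exact Finset.sum_congr rfl fun i _ => integral_finset_sum _ fun j _ => hiii i j
    rw [h1]
    have h2 : ∀ i : Fin n, ∑ j : Fin n, ∫ ω, (⟪ε i ω, ε j ω⟫ : ℝ) ∂P ≤ K := by
      intro i
      have hdiag : ∑ j : Fin n, ∫ ω, (⟪ε i ω, ε j ω⟫ : ℝ) ∂P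
          = ∫ ω, (⟪ε i ω, ε i ω⟫ : ℝ) ∂P := by
        refine Finset.sum_eq_single i (fun j _ hji => ?_) (fun h => absurd (Finset.mem_univ i) h)
        have hind : IndepFun (ε i) (ε j) P := hindep.indepFun (Ne.symm hji)
        rw [indep_integral_inner hind (hmeas i) (hmeas j) (hint i) (hint j), hzero i,
          inner_zero_left]
      rw [hdiag]
      calc ∫ ω, (⟪ε i ω, ε i ω⟫ : ℝ) ∂P = ∫ ω, ‖ε i ω‖ ^ 2 ∂P :=
            integral_congr_ae (Filter.Eventually.of_forall fun ω =>
              real_inner_self_eq_norm_sq _)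
        _ ≤ K := hK i
    calc ∑ i : Fin n, ∑ j : Fin n, ∫ ω, (⟪ε i ω, ε j ω⟫ : ℝ) ∂P
        ≤ ∑ _i : Fin n, K := Finset.sum_le_sum fun i _ => h2 i
      _ = (n : ℝ) * K := by rw [Finset.sum_const, Finset.card_univ, Fintype.card_fin,
            nsmul_eq_mul]
  -- events
  set A : ℕ → Set Ω := fun k => {ω | lam < ‖S k ω‖ ∧ ∀ j < k, ‖S j ω‖ ≤ lam} with hAdef
  have hAmeas : ∀ k, MeasurableSet (A k) := by
    intro k
    have : A k = {ω | lam < ‖S k ω‖} ∩ ⋂ j ∈ Set.Iio k, {ω | ‖S j ω‖ ≤ lam} := by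
      ext ω
      simp only [hAdef, Set.mem_setOf_eq, Set.mem_inter_iff, Set.mem_iInter, Set.mem_Iio]
    rw [this]
    exact (measurableSet_lt measurable_const (hSmeas k).norm).inter
      (MeasurableSet.biInter (Set.to_countable _) fun j _ =>
        measurableSet_le (hSmeas j).norm measurable_const)
  set E : Set Ω := {ω | ∀ k ≤ n, ‖S k ω‖ ≤ lam} with hEdef
  have hEmeas : MeasurableSet E := by
    have : E = ⋂ k ∈ Set.Iic n, {ω | ‖S k ω‖ ≤ lam} := by
      ext ω
      simp only [hEdef, Set.mem_setOf_eq, Set.mem_iInter, Set.mem_Iic]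
    rw [this]
    exact MeasurableSet.biInter (Set.to_countable _) fun k _ =>
      measurableSet_le (hSmeas k).norm measurable_const
  have hEc : Eᶜ ⊆ ⋃ k ∈ Finset.range (n + 1), A k := by
    intro ω hω
    simp only [hEdef, Set.mem_compl_iff, Set.mem_setOf_eq, not_forall] at hω
    obtain ⟨k0, hk0n, hk0⟩ := hω
    have hk0' : lam < ‖S k0 ω‖ := lt_of_not_ge hk0
    have hex : ∃ k, lam < ‖S k ω‖ := ⟨k0, hk0'⟩
    have hq := Nat.find_spec hex
    have hk1n : Nat.find hex ≤ n := le_trans (Nat.find_min' hex hk0') hk0n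
    have hk1A : ω ∈ A (Nat.find hex) := by
      refine ⟨hq, fun j hj => ?_⟩
      exact not_lt.mp (Nat.find_min hex hj)
    exact Set.mem_biUnion (Finset.mem_coe.mpr (Finset.mem_range.mpr (by omega))) hk1A
  have hdisj : (↑(Finset.range (n + 1)) : Set ℕ).Pairwise (Function.onFun Disjoint A) := by
    intro a _ b _ hab
    have key : ∀ a b : ℕ, a < b → Disjoint (A a) (A b) := by
      intro a b haltb
      rw [Set.disjoint_left]
      intro ω hωa hωb
      exact absurd (hωb.2 a haltb) (not_le.mpr hωa.1)
    rcases lt_or_gt_of_ne hab with h | h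
    · exact key a b h
    · exact (key b a h).symm
  -- the independence argument : the cross term vanishes
  have hcross : ∀ k ≤ n, ∫ ω in A k, (⟪S k ω, S n ω - S k ω⟫ : ℝ) ∂P = 0 := by
    intro k hkn
    set Sset : Finset (Fin n) := Finset.univ.filter (fun j : Fin n => (j : ℕ) < k) with hSset
    set Tset : Finset (Fin n) := Finset.univ.filter (fun j : Fin n => ¬ ((j : ℕ) < k)) with hTset
    have hST : Disjoint Sset Tset := by
      rw [Finset.disjoint_left]
      intro j hjS hjT
      rw [hSset, Finset.mem_filter] at hjS
      rw [hTset, Finset.mem_filter] at hjT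
      exact hjT.2 hjS.2
    have base := hindep.indepFun_finset Sset Tset hST hmeas
    set X : Ω → H := (A k).indicator (S k) with hXdef
    set Z : Ω → H := fun ω => S n ω - S k ω with hZdef
    have hZsum : ∀ ω, Z ω = ∑ j ∈ Tset, ε j ω := by
      intro ω
      have hsplit := Finset.sum_filter_add_sum_filter_not Finset.univ
        (fun j : Fin n => (j : ℕ) < k) (fun j => ε j ω)
      have hfilter : Finset.univ.filter (fun j : Fin n => (j : ℕ) < n) = Finset.univ :=
        Finset.filter_true_of_mem fun j _ => j.isLt
      rw [hZdef]
      show S n ω - S k ω = _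
      rw [hSdef]
      simp only [hfilter]
      rw [← hsplit]
      abel
    -- partial sums as functions of the first k coordinates
    set ps : ({x // x ∈ Sset} → H) → ℕ → H := fun v j =>
      ∑ i ∈ Finset.univ.filter (fun i : {x // x ∈ Sset} => ((i : Fin n) : ℕ) < j), v i
      with hpsdef
    have hps : ∀ ω, ∀ j ≤ k, ps (fun i : {x // x ∈ Sset} => ε i ω) j = S j ω := by
      intro ω j hj
      rw [hpsdef]
      show ∑ i ∈ Finset.univ.filter (fun i : {x // x ∈ Sset} => ((i : Fin n) : ℕ) < j),
        ε (i : Fin n) ω = _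
      rw [Finset.sum_filter, Finset.univ_eq_attach,
        Finset.sum_attach Sset (fun x : Fin n => if (x : ℕ) < j then ε x ω else 0),
        ← Finset.sum_filter]
      have hfs : Sset.filter (fun a : Fin n => (a : ℕ) < j)
          = Finset.univ.filter (fun a : Fin n => (a : ℕ) < j) := by
        ext a
        simp only [hSset, Finset.mem_filter, Finset.mem_univ, true_and]
        omega
      rw [hfs]
    set φ : ({x // x ∈ Sset} → H) → H :=
      ({v | lam < ‖ps v k‖ ∧ ∀ j < k, ‖ps v j‖ ≤ lam}).indicator (fun v => ps v k) with hφdef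
    have hpsmeas : ∀ j, Measurable (fun v : {x // x ∈ Sset} → H => ps v j) := by
      intro j
      rw [hpsdef]
      exact Finset.measurable_sum _ fun i _ => measurable_pi_apply i
    have hφmeas : Measurable φ := by
      rw [hφdef]
      refine Measurable.indicator (hpsmeas k) ?_
      have : {v : {x // x ∈ Sset} → H | lam < ‖ps v k‖ ∧ ∀ j < k, ‖ps v j‖ ≤ lam}
          = {v | lam < ‖ps v k‖} ∩ ⋂ j ∈ Set.Iio k, {v | ‖ps v j‖ ≤ lam} := by
        ext v
        simp only [Set.mem_setOf_eq, Set.mem_inter_iff, Set.mem_iInter, Set.mem_Iio]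
      rw [this]
      exact (measurableSet_lt measurable_const (hpsmeas k).norm).inter
        (MeasurableSet.biInter (Set.to_countable _) fun j _ =>
          measurableSet_le (hpsmeas j).norm measurable_const)
    set ψ : ({x // x ∈ Tset} → H) → H := fun v => ∑ i : {x // x ∈ Tset}, v i with hψdef
    have hψmeas : Measurable ψ := Finset.measurable_sum _ fun i _ => measurable_pi_apply i
    have hφX : (φ ∘ fun ω (i : {x // x ∈ Sset}) => ε i ω) = X := by
      funext ω
      have hmemiff : ((fun i : {x // x ∈ Sset} => ε i ω)
          ∈ {v | lam < ‖ps v k‖ ∧ ∀ j < k, ‖ps v j‖ ≤ lam}) ↔ ω ∈ A k := by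
        simp only [Set.mem_setOf_eq, hAdef]
        rw [hps ω k le_rfl]
        constructor
        · rintro ⟨h1, h2⟩
          exact ⟨h1, fun j hj => by have := h2 j hj; rwa [hps ω j (by omega)] at this⟩
        · rintro ⟨h1, h2⟩
          exact ⟨h1, fun j hj => by rw [hps ω j (by omega)]; exact h2 j hj⟩
      show φ (fun i : {x // x ∈ Sset} => ε i ω) = X ω
      rw [hφdef, hXdef]
      by_cases hω : ω ∈ A k
      · rw [Set.indicator_of_mem (hmemiff.mpr hω), Set.indicator_of_mem hω]
        exact hps ω k le_rfl
      · rw [Set.indicator_of_notMem (fun hc => hω (hmemiff.mp hc)),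
          Set.indicator_of_notMem hω]
    have hψZ : (ψ ∘ fun ω (i : {x // x ∈ Tset}) => ε i ω) = Z := by
      funext ω
      show ψ (fun i : {x // x ∈ Tset} => ε i ω) = Z ω
      rw [hψdef, hZsum ω]
      show ∑ i ∈ Finset.univ, ε ((i : {x // x ∈ Tset}) : Fin n) ω = _
      rw [Finset.univ_eq_attach, Finset.sum_attach Tset (fun x : Fin n => ε x ω)]
    have hiXZ : IndepFun X Z P := by
      have := base.comp hφmeas hψmeas
      rwa [hφX, hψZ] at this
    have hXmeas : Measurable X := (hSmeas k).indicator (hAmeas k)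
    have hXint : Integrable X P := (hSint k).indicator (hAmeas k)
    have hZmeas : Measurable Z := (hSmeas n).sub (hSmeas k)
    have hZint : Integrable Z P := (hSint n).sub (hSint k)
    have h3 : ∫ ω in A k, (⟪S k ω, S n ω - S k ω⟫ : ℝ) ∂P = ∫ ω, (⟪X ω, Z ω⟫ : ℝ) ∂P := by
      rw [← integral_indicator (hAmeas k)]
      refine integral_congr_ae (Filter.Eventually.of_forall fun ω => ?_)
      by_cases hω : ω ∈ A k
      · simp only [Set.indicator_of_mem hω, hXdef, hZdef]
      · simp only [Set.indicator_of_notMem hω, hXdef, inner_zero_left]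
    have hZzero : ∫ ω, Z ω ∂P = 0 := by
      rw [integral_congr_ae (Filter.Eventually.of_forall hZsum),
        integral_finset_sum _ fun j _ => hint j]
      exact Finset.sum_eq_zero fun j _ => hzero j
    rw [h3, indep_integral_inner hiXZ hXmeas hZmeas hXint hZint, hZzero, inner_zero_right]
  -- per-event bound
  have hkey : ∀ k ∈ Finset.range (n + 1),
      lam ^ 2 * (P (A k)).toReal ≤ ∫ ω in A k, ‖S n ω‖ ^ 2 ∂P := by
    intro k hk
    rw [Finset.mem_range] at hk
    have h1 : lam ^ 2 * (P (A k)).toReal ≤ ∫ ω in A k, ‖S k ω‖ ^ 2 ∂P :=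
      setIntegral_ge_of_const_le_real (hAmeas k) (measure_ne_top P _)
        (fun ω hω => pow_le_pow_left₀ hlam.le (le_of_lt hω.1) 2)
        (hSsqint k).integrableOn
    have hptwise : ∀ ω, ‖S n ω‖ ^ 2
        = ‖S k ω‖ ^ 2 + (2 * (⟪S k ω, S n ω - S k ω⟫ : ℝ) + ‖S n ω - S k ω‖ ^ 2) := by
      intro ω
      have h := norm_add_sq_real (S k ω) (S n ω - S k ω)
      rw [show S k ω + (S n ω - S k ω) = S n ω from by abel] at h
      rw [h]
      ring
    have hInt2 : Integrable (fun ω => 2 * (⟪S k ω, S n ω - S k ω⟫ : ℝ)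
        + ‖S n ω - S k ω‖ ^ 2) P := by
      refine Integrable.add (Integrable.const_mul ?_ 2) (hdiffsqint k)
      exact inner_int_aux (hSmeas k) ((hSmeas n).sub (hSmeas k)) (hSsqint k) (hdiffsqint k)
    have h2 : ∫ ω in A k, ‖S n ω‖ ^ 2 ∂P
        = ∫ ω in A k, ‖S k ω‖ ^ 2 ∂P
          + (2 * ∫ ω in A k, (⟪S k ω, S n ω - S k ω⟫ : ℝ) ∂P
            + ∫ ω in A k, ‖S n ω - S k ω‖ ^ 2 ∂P) := by
      rw [setIntegral_congr_fun (hAmeas k) (fun ω _ => hptwise ω),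
        integral_add (hSsqint k).integrableOn hInt2.integrableOn,
        integral_add (f := fun ω => 2 * (⟪S k ω, S n ω - S k ω⟫ : ℝ))
          (g := fun ω => ‖S n ω - S k ω‖ ^ 2) ((inner_int_aux (hSmeas k) ((hSmeas n).sub (hSmeas k)) (hSsqint k)
          (hdiffsqint k)).const_mul 2).integrableOn (hdiffsqint k).integrableOn,
        integral_const_mul]
    have h4 : 0 ≤ ∫ ω in A k, ‖S n ω - S k ω‖ ^ 2 ∂P :=
      setIntegral_nonneg (hAmeas k) fun ω _ => sq_nonneg _
    rw [h2, hcross k (by omega)]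
    linarith
  -- sum up
  have hsum : ∑ k ∈ Finset.range (n + 1), lam ^ 2 * (P (A k)).toReal ≤ (n : ℝ) * K := by
    calc ∑ k ∈ Finset.range (n + 1), lam ^ 2 * (P (A k)).toReal
        ≤ ∑ k ∈ Finset.range (n + 1), ∫ ω in A k, ‖S n ω‖ ^ 2 ∂P :=
          Finset.sum_le_sum hkey
      _ = ∫ ω in ⋃ k ∈ Finset.range (n + 1), A k, ‖S n ω‖ ^ 2 ∂P :=
          (integral_biUnion_finset _ (fun k _ => hAmeas k) hdisj
            (fun k _ => (hSsqint n).integrableOn)).symm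
      _ ≤ ∫ ω, ‖S n ω‖ ^ 2 ∂P :=
          setIntegral_le_integral (hSsqint n)
            (Filter.Eventually.of_forall fun ω => sq_nonneg _)
      _ ≤ (n : ℝ) * K := hvarSn
  have hPEc : (P Eᶜ).toReal ≤ ∑ k ∈ Finset.range (n + 1), (P (A k)).toReal := by
    have h1 : P Eᶜ ≤ ∑ k ∈ Finset.range (n + 1), P (A k) :=
      le_trans (measure_mono hEc) (measure_biUnion_finset_le _ _)
    have h2 : (∑ k ∈ Finset.range (n + 1), P (A k)).toReal
        = ∑ k ∈ Finset.range (n + 1), (P (A k)).toReal :=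
      ENNReal.toReal_sum fun _ _ => measure_ne_top P _
    rw [← h2]
    refine ENNReal.toReal_mono ?_ h1
    exact (ENNReal.sum_lt_top.mpr fun k _ => measure_lt_top P _).ne
  have hEcbound : lam ^ 2 * (P Eᶜ).toReal ≤ (n : ℝ) * K := by
    have h1 : lam ^ 2 * (P Eᶜ).toReal
        ≤ lam ^ 2 * ∑ k ∈ Finset.range (n + 1), (P (A k)).toReal :=
      mul_le_mul_of_nonneg_left hPEc (by positivity)
    rw [Finset.mul_sum] at h1
    linarith
  have hEc2 : (P Eᶜ).toReal ≤ (n : ℝ) * K / lam ^ 2 := by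
    rw [le_div_iff₀ (by positivity)]
    linarith [hEcbound]
  have hcompl : (P E).toReal + (P Eᶜ).toReal = 1 := by
    have h1 : P E + P Eᶜ = 1 := by
      rw [measure_add_measure_compl hEmeas, measure_univ]
    have h2 := congrArg ENNReal.toReal h1
    rwa [ENNReal.toReal_add (measure_ne_top P _) (measure_ne_top P _), ENNReal.toReal_one] at h2
  refine ⟨E, hEmeas, by linarith, fun ω hω k hk => ?_⟩
  rw [hSpsum k ω]
  exact hω k hk

end Part7

/-- Theorem 3.4 (finite variance case): with probability at least `1 − 1/y²`, for any
`δ ∈ (0, Λ̲_{τ*}]` and any minimizer `τ̂` of the empirical risk over segmentations with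
`D_{τ*}` segments and smallest segment of normalized length at least `δ`, if
`v₂(y, δ) ≤ Λ̲_{τ*}` then `(1/n) d∞^{(1)}(τ*, τ̂) ≤ v₂(y, δ)`. -/
theorem kcp_known_D_variance
    {H : Type*} [NormedAddCommGroup H] [InnerProductSpace ℝ H] [CompleteSpace H]
    [SecondCountableTopology H] [MeasurableSpace H] [BorelSpace H]
    {Ω : Type*} [MeasurableSpace Ω] (P : Measure Ω) [IsProbabilityMeasure P]
    {n : ℕ} (hn : 2 ≤ n)
    (Y : Fin n → Ω → H) (hYmeas : ∀ i, Measurable (Y i))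
    (hYint : ∀ i, Integrable (Y i) P)
    (hYindep : iIndepFun Y P)
    (μs : Fin n → H) (hμs : ∀ i, μs i = ∫ ω, Y i ω ∂P)
    (τs : Seg n) (hτs : IsTrueSeg τs μs) (hDs : 2 ≤ τs.D)
    (V : ℝ) (hV : 0 < V)
    (hε2int : ∀ i, Integrable (fun ω => ‖Y i ω - μs i‖ ^ 2) P)
    (hvar : ∀ i, ∫ ω, ‖Y i ω - μs i‖ ^ 2 ∂P ≤ V)
    (y : ℝ) (hy : 0 < y) :
    ∃ E : Set Ω, MeasurableSet E ∧ 1 - 1 / y ^ 2 ≤ (P E).toReal ∧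
      ∀ ω ∈ E, ∀ δ : ℝ, 0 < δ → δ ≤ Seg.lamMin τs →
        ∀ τh : Seg n, τh.D = τs.D → δ ≤ Seg.lamMin τh →
          (∀ τ : Seg n, τ.D = τs.D → δ ≤ Seg.lamMin τ →
            (1 / n) * hnorm2 (fun i => Y i ω - Seg.proj τh (fun j => Y j ω) i)
              ≤ (1 / n) * hnorm2 (fun i => Y i ω - Seg.proj τ (fun j => Y j ω) i)) →
          24 * (τs.D : ℝ) ^ 2 * (deltaMax τs μs * Real.sqrt V / (deltaMin τs μs) ^ 2) * (y / Real.sqrt n) + 8 * (τs.D : ℝ) * (V / (deltaMin τs μs) ^ 2) * (y ^ 2 / (n * δ)) ≤ Seg.lamMin τs →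
          (Seg.dinf1 τs τh : ℝ) / n ≤ 24 * (τs.D : ℝ) ^ 2 * (deltaMax τs μs * Real.sqrt V / (deltaMin τs μs) ^ 2) * (y / Real.sqrt n) + 8 * (τs.D : ℝ) * (V / (deltaMin τs μs) ^ 2) * (y ^ 2 / (n * δ)) := by
  have hn0 : 0 < n := by omega
  have hnr : (0 : ℝ) < (n : ℝ) := by exact_mod_cast hn0
  -- the centered variables
  set ε : Fin n → Ω → H := fun i ω => Y i ω - μs i with hεdef
  have hεmeas : ∀ i, Measurable (ε i) := fun i => (hYmeas i).sub measurable_const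
  have hεindep : iIndepFun ε P :=
    hYindep.comp (fun i v => v - μs i) (fun i => measurable_id.sub measurable_const)
  have hεint : ∀ i, Integrable (ε i) P := fun i => (hYint i).sub (integrable_const _)
  have hεzero : ∀ i, ∫ ω, ε i ω ∂P = 0 := by
    intro i
    rw [hεdef]
    rw [integral_sub (hYint i) (integrable_const _), integral_const, measureReal_def, measure_univ,
      ENNReal.toReal_one, one_smul, ← hμs i, sub_self]
  -- the event
  set lam : ℝ := y * Real.sqrt ((n : ℝ) * V) with hlamdef
  have hnV : (0 : ℝ) < (n : ℝ) * V := by positivity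
  have hlam : 0 < lam := by
    rw [hlamdef]
    positivity
  obtain ⟨E, hEmeas, hEprob, hEbound⟩ := kolmogorov_event ε hεmeas hεindep hεint hεzero
    hε2int V hvar lam hlam
  have hlamsq : lam ^ 2 = y ^ 2 * ((n : ℝ) * V) := by
    rw [hlamdef, mul_pow, Real.sq_sqrt hnV.le]
  have hprob : 1 - 1 / y ^ 2 ≤ (P E).toReal := by
    refine le_trans (le_of_eq ?_) hEprob
    have h2 : (n : ℝ) * V / (y ^ 2 * ((n : ℝ) * V)) = 1 / y ^ 2 := by
      rw [mul_comm (y ^ 2) ((n : ℝ) * V), ← div_div, div_self (ne_of_gt hnV)]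
    rw [hlamsq, h2]
  refine ⟨E, hEmeas, hprob, ?_⟩
  intro ω hω δ hδ hδs τh hDh hδh hminin hvle
  have hM : ∀ k ≤ n, ‖Seg.psum (fun i => Y i ω - μs i) k‖ ≤ lam := fun k hk =>
    hEbound ω hω k hk
  -- the empirical risk comparison, in unnormalized form
  have hmin0 := hminin τs rfl hδs
  have hmin' : hnorm2 (fun i => Y i ω - Seg.proj τh (fun j => Y j ω) i)
      ≤ hnorm2 (fun i => Y i ω - Seg.proj τs (fun j => Y j ω) i) := by
    have h1n : (0 : ℝ) < 1 / (n : ℝ) := by positivity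
    exact le_of_mul_le_mul_left (by exact_mod_cast hmin0) h1n
  have hYe : (fun j : Fin n => μs j + (Y j ω - μs j)) = fun j => Y j ω :=
    funext fun j => by abel
  have hfun : ∀ τ : Seg n,
      (fun i => (μs i + (Y i ω - μs i)) - Seg.proj τ (fun j => μs j + (Y j ω - μs j)) i)
        = (fun i => Y i ω - Seg.proj τ (fun j => Y j ω) i) := by
    intro τ
    funext i
    rw [hYe]
    congr 1
    abel
  have hU := upper_bound hn0 μs (fun j => Y j ω - μs j) τs τh hτs hDs hDh lam hM δ hδ hδh
    (by rw [hfun τh, hfun τs]; exact hmin')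
  -- the lower bound
  set Ls : ℕ := (Finset.range τs.D).inf' (Finset.nonempty_range_iff.mpr τs.hD.ne')
    (fun ℓ => τs.t (ℓ + 1) - τs.t ℓ) with hLsdef
  have hLs : ∀ ℓ < τs.D, Ls ≤ τs.t (ℓ + 1) - τs.t ℓ := fun ℓ hℓ =>
    Finset.inf'_le _ (Finset.mem_range.mpr hℓ)
  have hlamMin : Seg.lamMin τs = (Ls : ℝ) / (n : ℝ) := rfl
  have hL := lower_bound hn0 μs τs τh hτs hDs hDh Ls hLs
  -- numeric assembly
  set Dr : ℝ := (τs.D : ℝ) with hDr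
  set dmx : ℝ := deltaMax τs μs with hdmx
  set q : ℝ := deltaMin τs μs with hq
  have hqpos : 0 < q := deltaMin_pos τs μs hτs hDs
  have hdmxpos : 0 < dmx := lt_of_lt_of_le hqpos (deltaMin_le_deltaMax τs μs hDs)
  have hDrpos : (0 : ℝ) < Dr := by
    rw [hDr]
    exact_mod_cast (by omega : 0 < τs.D)
  set s : ℝ := Real.sqrt n with hs
  set v : ℝ := Real.sqrt V with hv
  have hspos : 0 < s := Real.sqrt_pos.mpr hnr
  have hvpos : 0 < v := Real.sqrt_pos.mpr hV
  have hsn : s * s = (n : ℝ) := Real.mul_self_sqrt (Nat.cast_nonneg n)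
  have hsv : v * v = V := Real.mul_self_sqrt hV.le
  have hlam_eq : lam = y * (s * v) := by
    rw [hlamdef, hs, hv, ← Real.sqrt_mul (Nat.cast_nonneg n)]
  set nv : ℝ := (n : ℝ) * (24 * Dr ^ 2 * (dmx * v / q ^ 2) * (y / s)
    + 8 * Dr * (V / q ^ 2) * (y ^ 2 / ((n : ℝ) * δ))) with hnv
  -- combine upper and lower bounds
  have hchain : ((min (Seg.dinf1 τs τh) Ls : ℕ) : ℝ) * q ^ 2 / 2
      ≤ 8 * Dr ^ 2 * dmx * lam + Dr * (2 * lam) ^ 2 / ((n : ℝ) * δ) := le_trans hL hU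
  have hq2pos : (0 : ℝ) < q ^ 2 := by positivity
  have hmin_le : ((min (Seg.dinf1 τs τh) Ls : ℕ) : ℝ)
      ≤ 2 * (8 * Dr ^ 2 * dmx * lam + Dr * (2 * lam) ^ 2 / ((n : ℝ) * δ)) / q ^ 2 := by
    rw [le_div_iff₀ hq2pos]
    linarith
  have hkey_eq : 2 * (8 * Dr ^ 2 * dmx * lam + Dr * (2 * lam) ^ 2 / ((n : ℝ) * δ)) / q ^ 2
      = nv - 8 * Dr ^ 2 * dmx * v * y * s / q ^ 2 := by
    rw [hnv, hlam_eq, ← hsn, ← hsv]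
    have hs0 : s ≠ 0 := ne_of_gt hspos
    have hv0 : v ≠ 0 := ne_of_gt hvpos
    have hq0 : q ≠ 0 := ne_of_gt hqpos
    have hδ0 : δ ≠ 0 := ne_of_gt hδ
    field_simp
    ring
  have hextra : 0 < 8 * Dr ^ 2 * dmx * v * y * s / q ^ 2 := by positivity
  have hmin_lt : ((min (Seg.dinf1 τs τh) Ls : ℕ) : ℝ) < nv := by
    rw [hkey_eq] at hmin_le
    linarith
  have hnvLs : nv ≤ (Ls : ℝ) := by
    have h1 : nv ≤ (n : ℝ) * Seg.lamMin τs := by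
      rw [hnv]
      exact mul_le_mul_of_nonneg_left hvle hnr.le
    rw [hlamMin] at h1
    rw [mul_div_cancel₀ _ (ne_of_gt hnr)] at h1
    exact h1
  have hdlt : ((Seg.dinf1 τs τh : ℕ) : ℝ) < nv := by
    rcases le_or_gt Ls (Seg.dinf1 τs τh) with hcase | hcase
    · exfalso
      rw [min_eq_right hcase] at hmin_lt
      linarith
    · rwa [min_eq_left (le_of_lt hcase)] at hmin_lt
  rw [div_le_iff₀ hnr]
  rw [hnv] at hdlt
  linarith
end

section
/- Let τ¹, τ² ∈ T_n be segmentations such that D_{τ¹} = D_{τ²} and (1/n) d∞^{(1)}(τ¹,τ²) < Λ̲_{τ¹}/2. Then d∞^{(1)}(τ¹,τ²) = d∞^{(1)}(τ²,τ¹) = d_H^{(1)}(τ¹,τ²). -/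
open MeasureTheory ProbabilityTheory

lemma Seg.t_mono {n : ℕ} (τ : Seg n) : ∀ {a b : ℕ}, a ≤ b → b ≤ τ.D → τ.t a ≤ τ.t b := by
  intro a b hab hbD
  induction b with
  | zero => rw [Nat.le_zero.mp hab]
  | succ b ih =>
    rcases Nat.eq_or_lt_of_le hab with h | h
    · subst h; exact le_rfl
    · exact le_trans (ih (by omega) (by omega)) (τ.hmono b (by omega)).le

/-- Lemma 3.2 (ii): if `D_{τ¹} = D_{τ²}` and `(1/n) d∞^{(1)}(τ¹,τ²) < Λ̲_{τ¹}/2`, then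
`d∞^{(1)}(τ¹,τ²) = d∞^{(1)}(τ²,τ¹) = d_H^{(1)}(τ¹,τ²)`. -/
theorem dinf1_symm_of_close {n : ℕ} (τ1 τ2 : Seg n) (hD : τ1.D = τ2.D)
    (h : (Seg.dinf1 τ1 τ2 : ℝ) / n < Seg.lamMin τ1 / 2) :
    Seg.dinf1 τ1 τ2 = Seg.dinf1 τ2 τ1 ∧ Seg.dinf1 τ1 τ2 = Seg.dH1 τ1 τ2 := by
  classical
  by_cases hD2 : 2 ≤ τ1.D
  swap
  · have e1 : Seg.dinf1 τ1 τ2 = 0 := by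
      simp only [Seg.dinf1]; rw [dif_neg (by omega), if_pos hD]
    have e2 : Seg.dinf1 τ2 τ1 = 0 := by
      simp only [Seg.dinf1]; rw [dif_neg (by omega), if_pos hD.symm]
    simp [Seg.dH1, e1, e2]
  have hD2' : 2 ≤ τ2.D := hD ▸ hD2
  set S1 : Finset ℕ := Finset.Ioo 0 τ1.D with hS1
  set S2 : Finset ℕ := Finset.Ioo 0 τ2.D with hS2
  have hne1 : S1.Nonempty := ⟨1, Finset.mem_Ioo.mpr ⟨Nat.one_pos, by omega⟩⟩
  have hne2 : S2.Nonempty := ⟨1, Finset.mem_Ioo.mpr ⟨Nat.one_pos, by omega⟩⟩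
  set d := Seg.dinf1 τ1 τ2 with hdd
  set m := (Finset.range τ1.D).inf' (Finset.nonempty_range_iff.mpr τ1.hD.ne')
      (fun ℓ => τ1.t (ℓ + 1) - τ1.t ℓ) with hm
  have hd : d = S1.sup fun i =>
      S2.inf' hne2 fun j => Nat.dist (τ1.t i) (τ2.t j) := by
    simp only [hdd, Seg.dinf1, dif_pos (⟨hD2, hD2'⟩ : 2 ≤ τ1.D ∧ 2 ≤ τ2.D)]; rfl
  -- n is positive
  have hn0 : 0 < n := by
    have h1 : τ1.t 0 < τ1.t 1 := τ1.hmono 0 (by omega)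
    have h2 : τ1.t 1 ≤ τ1.t τ1.D := Seg.t_mono τ1 (by omega) le_rfl
    have := τ1.h0; have := τ1.hn; omega
  -- 2*d < m
  have h2d : 2 * d < m := by
    have hnR : (0:ℝ) < n := by exact_mod_cast hn0
    simp only [Seg.lamMin, ← hm, ← hdd] at h
    have : (2 * d : ℝ) < m := by
      rw [div_div, div_lt_div_iff₀ hnR (by positivity)] at h
      nlinarith
    exact_mod_cast this
  have gap : ∀ a b, a < b → b ≤ τ1.D → τ1.t a + m ≤ τ1.t b := by
    intro a b hab hbD
    have h1 : m ≤ τ1.t (a + 1) - τ1.t a :=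
      Finset.inf'_le _ (Finset.mem_range.mpr (by omega))
    have h2 : τ1.t a < τ1.t (a + 1) := τ1.hmono a (by omega)
    have h3 : τ1.t (a + 1) ≤ τ1.t b := Seg.t_mono τ1 hab hbD
    omega
  have step1 : ∀ i, ∃ j, i ∈ S1 →
      j ∈ S2 ∧ Nat.dist (τ1.t i) (τ2.t j) ≤ d := by
    intro i
    by_cases hi : i ∈ S1
    · have hle : (S2.inf' hne2 fun j => Nat.dist (τ1.t i) (τ2.t j)) ≤ d :=
        hd ▸ Finset.le_sup (f := fun i => S2.inf' hne2 fun j => Nat.dist (τ1.t i) (τ2.t j)) hi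
      obtain ⟨j, hj, hje⟩ := Finset.exists_mem_eq_inf' hne2
        (fun j => Nat.dist (τ1.t i) (τ2.t j))
      exact ⟨j, fun _ => ⟨hj, by rw [← hje]; exact hle⟩⟩
    · exact ⟨0, fun h => absurd h hi⟩
  choose F hF using step1
  have Fmono : ∀ i i', i ∈ S1 → i' ∈ S1 → i < i' → F i < F i' := by
    intro i i' hi hi' hlt
    by_contra hge
    push_neg at hge
    have hmem := (hF i' hi').1
    have hle2 : τ2.t (F i') ≤ τ2.t (F i) :=
      Seg.t_mono τ2 hge (by have := (hF i hi).1; rw [hS2, Finset.mem_Ioo] at this; omega)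
    have d1 := (hF i hi).2
    have d2 := (hF i' hi').2
    have hgap := gap i i' hlt (by rw [hS1, Finset.mem_Ioo] at hi'; omega)
    simp only [Nat.dist] at d1 d2
    omega
  have Fge : ∀ i, i ∈ S1 → i ≤ F i := by
    intro i
    induction i with
    | zero => intro _; exact Nat.zero_le _
    | succ i ih =>
      intro hi
      by_cases hiS : i ∈ S1
      · have h1 := Fmono i (i + 1) hiS hi (by omega)
        have h2 := ih hiS; omega
      · have h1 := (hF (i + 1) hi).1
        rw [hS2, Finset.mem_Ioo] at h1
        rw [hS1, Finset.mem_Ioo] at hiS hi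
        omega
  have Fle : ∀ k i, i ∈ S1 → i + k = τ1.D - 1 → F i ≤ i := by
    intro k
    induction k with
    | zero =>
      intro i hi hk
      have h1 := (hF i hi).1
      rw [hS2, Finset.mem_Ioo] at h1
      omega
    | succ k ih =>
      intro i hi hk
      rw [hS1, Finset.mem_Ioo] at hi
      have hi1 : i + 1 ∈ S1 := by rw [hS1, Finset.mem_Ioo]; omega
      have h1 := ih (i + 1) hi1 (by omega)
      have h2 := Fmono i (i + 1) (by rw [hS1, Finset.mem_Ioo]; omega) hi1 (by omega)
      omega
  have key : ∀ i, i ∈ S1 → Nat.dist (τ1.t i) (τ2.t i) ≤ d := by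
    intro i hi
    have h1 := (hF i hi).2
    have h2 := Fge i hi
    have h3 := Fle (τ1.D - 1 - i) i hi (by rw [hS1, Finset.mem_Ioo] at hi; omega)
    have h4 : F i = i := by omega
    rwa [h4] at h1
  set d' := Seg.dinf1 τ2 τ1 with hdd'
  have hd' : d' = S2.sup fun j =>
      S1.inf' hne1 fun i => Nat.dist (τ2.t j) (τ1.t i) := by
    simp only [hdd', Seg.dinf1, dif_pos (⟨hD2', hD2⟩ : 2 ≤ τ2.D ∧ 2 ≤ τ1.D)]; rfl
  have hle1 : d' ≤ d := by
    rw [hd']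
    apply Finset.sup_le
    intro j hj
    have hj1 : j ∈ S1 := by rw [hS2, Finset.mem_Ioo] at hj; rw [hS1, Finset.mem_Ioo]; omega
    calc (S1.inf' hne1 fun i => Nat.dist (τ2.t j) (τ1.t i))
        ≤ Nat.dist (τ2.t j) (τ1.t j) := Finset.inf'_le _ hj1
      _ = Nat.dist (τ1.t j) (τ2.t j) := Nat.dist_comm _ _
      _ ≤ d := key j hj1
  have hle2 : d ≤ d' := by
    obtain ⟨i0, hi0, hi0e⟩ := Finset.exists_mem_eq_sup S1 hne1
      (fun i => S2.inf' hne2 fun j => Nat.dist (τ1.t i) (τ2.t j))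
    have hde : d = S2.inf' hne2 fun j => Nat.dist (τ1.t i0) (τ2.t j) := by
      rw [hd, hi0e]
    have hi0S2 : i0 ∈ S2 := by
      rw [hS1, Finset.mem_Ioo] at hi0; rw [hS2, Finset.mem_Ioo]; omega
    have hkey0 : Nat.dist (τ1.t i0) (τ2.t i0) ≤ d := key i0 hi0
    have lower : ∀ i ∈ S1, d ≤ Nat.dist (τ2.t i0) (τ1.t i) := by
      intro i hi
      by_cases hii : i = i0
      · subst hii
        rw [Nat.dist_comm]
        rw [hde]
        exact Finset.inf'_le _ hi0S2
      · rw [hS1, Finset.mem_Ioo] at hi hi0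
        rcases lt_or_gt_of_ne hii with hlt | hlt
        · have hg := gap i i0 hlt (by omega)
          simp only [Nat.dist] at hkey0 ⊢
          omega
        · have hg := gap i0 i hlt (by omega)
          simp only [Nat.dist] at hkey0 ⊢
          omega
    calc d ≤ S1.inf' hne1 fun i => Nat.dist (τ2.t i0) (τ1.t i) :=
        Finset.le_inf' _ _ lower
      _ ≤ d' := hd' ▸ Finset.le_sup (f := fun j => S1.inf' hne1 fun i => Nat.dist (τ2.t j) (τ1.t i)) hi0S2
  have heq : d = d' := le_antisymm hle2 hle1
  exact ⟨heq, by rw [Seg.dH1, ← hdd, ← hdd', heq, max_self]⟩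
end

section
/- Let τ¹, τ² ∈ T_n be segmentations with D_{τ¹} = D_{τ²} and (1/n) d∞^{(1)}(τ¹,τ²) < Λ̲_{τ¹}/2. Then d_F(τ¹,τ²)² ≤ (12 D_{τ¹} / Λ̲_{τ¹}) · (1/n) d∞^{(1)}(τ¹,τ²). -/
open MeasureTheory ProbabilityTheory

open Finset

variable {n : ℕ}

lemma t_lt (τ : Seg n) : ∀ a b, a < b → b ≤ τ.D → τ.t a < τ.t b := by
  intro a b hab hbD
  induction b with
  | zero => omega
  | succ b ih =>
    rcases Nat.lt_succ_iff_lt_or_eq.mp hab with h' | h'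
    · exact lt_trans (ih h' (by omega)) (τ.hmono b (by omega))
    · subst h'; exact τ.hmono a (by omega)

lemma t_le (τ : Seg n) {a b : ℕ} (hab : a ≤ b) (hbD : b ≤ τ.D) : τ.t a ≤ τ.t b := by
  rcases eq_or_lt_of_le hab with rfl | h
  · exact le_rfl
  · exact (t_lt τ a b h hbD).le

lemma t_le_n (τ : Seg n) {b : ℕ} (hbD : b ≤ τ.D) : τ.t b ≤ n := by
  have := t_le τ hbD le_rfl; rw [τ.hn] at this; exact this

lemma card_filter_Ico (a b : ℕ) (hb : b ≤ n) :
    (Finset.univ.filter fun j : Fin n => a ≤ (j:ℕ) ∧ (j:ℕ) < b).card = b - a := by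
  rw [← Nat.card_Ico]
  refine Finset.card_bij (fun j _ => (j:ℕ)) ?_ ?_ ?_
  · intro j hj; simp only [mem_filter, mem_univ, true_and] at hj; simp [mem_Ico]; omega
  · intro j1 h1 j2 h2 h; exact Fin.val_injective h
  · intro k hk; simp only [mem_Ico] at hk
    exact ⟨⟨k, by omega⟩, by simp; omega, rfl⟩

lemma key_ineq (A B C dd : ℝ) (hA : 1 ≤ A) (hB : 1 ≤ B) (hC : 0 ≤ C)
    (hdd : 0 ≤ dd) (h1 : A ≤ C + 2*dd) (h2 : B ≤ A + 2*dd) (h3 : 2*dd < A) :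
    2 - 2*(C^2 * (A⁻¹ * B⁻¹)) ≤ 12 * dd / A := by
  have hApos : (0:ℝ) < A := by linarith
  have hBpos : (0:ℝ) < B := by linarith
  have hC2 : (A - 2*dd)^2 ≤ C^2 := by nlinarith
  have hkey : 2*(A*B) - 2*C^2 ≤ 12*dd*B := by
    rcases le_or_gt A (6*dd) with hc | hc
    · nlinarith
    · nlinarith [mul_nonneg (by linarith : (0:ℝ) ≤ A + 2*dd - B) (by linarith : (0:ℝ) ≤ A - 6*dd), sq_nonneg dd]
  have hL : 2 - 2*(C^2 * (A⁻¹ * B⁻¹)) = (2*(A*B) - 2*C^2)/(A*B) := by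
    rw [eq_div_iff (by positivity)]; field_simp
  have hR : 12 * dd / A = (12*dd*B)/(A*B) := by
    rw [div_eq_div_iff (by positivity) (by positivity)]; ring
  rw [hL, hR]
  exact (div_le_div_iff_of_pos_right (by positivity)).mpr hkey

lemma seg_card (τ : Seg n) {ℓ : ℕ} (hℓ : ℓ < τ.D) :
    (τ.seg ℓ).card = τ.t (ℓ+1) - τ.t ℓ :=
  card_filter_Ico _ _ (t_le_n τ hℓ)

lemma seg_card_pos (τ : Seg n) {ℓ : ℕ} (hℓ : ℓ < τ.D) : 0 < (τ.seg ℓ).card := by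
  rw [seg_card τ hℓ]
  have := τ.hmono ℓ hℓ; omega

lemma seg_inter_card (τ1 τ2 : Seg n) {ℓ m : ℕ} (hℓ : ℓ < τ1.D) (hm : m < τ2.D) :
    (τ1.seg ℓ ∩ τ2.seg m).card
      = min (τ1.t (ℓ+1)) (τ2.t (m+1)) - max (τ1.t ℓ) (τ2.t m) := by
  have h1 : τ1.seg ℓ ∩ τ2.seg m
      = Finset.univ.filter fun j : Fin n =>
          max (τ1.t ℓ) (τ2.t m) ≤ (j:ℕ) ∧ (j:ℕ) < min (τ1.t (ℓ+1)) (τ2.t (m+1)) := by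
    ext j
    simp only [Seg.seg, mem_inter, mem_filter, mem_univ, true_and]
    omega
  rw [h1, card_filter_Ico]
  have := t_le_n τ1 (show ℓ+1 ≤ τ1.D by omega); omega

lemma sum_pmat_aux (s t : Finset (Fin n)) (x y : ℝ) :
    ∑ i : Fin n, ∑ j : Fin n,
      (if i ∈ s ∧ j ∈ s then x else 0) * (if i ∈ t ∧ j ∈ t then y else 0)
      = ((s ∩ t).card : ℝ)^2 * (x * y) := by
  have h1 : ∀ i j : Fin n,
      (if i ∈ s ∧ j ∈ s then x else 0) * (if i ∈ t ∧ j ∈ t then y else 0)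
      = ((if i ∈ s ∩ t then (1:ℝ) else 0) * (if j ∈ s ∩ t then (1:ℝ) else 0)) * (x * y) := by
    intro i j
    by_cases h1 : i ∈ s <;> by_cases h2 : j ∈ s <;> by_cases h3 : i ∈ t <;> by_cases h4 : j ∈ t <;>
      simp [Finset.mem_inter, h1, h2, h3, h4]
  simp_rw [h1, ← Finset.sum_mul, ← Finset.mul_sum, ← Finset.sum_mul]
  have h2 : ∑ i : Fin n, (if i ∈ s ∩ t then (1:ℝ) else 0) = ((s ∩ t).card : ℝ) := by
    rw [Finset.sum_ite_mem]
    simp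
  rw [h2]; ring

lemma pmat_prod_sum (τ1 τ2 : Seg n) :
    ∑ i : Fin n, ∑ j : Fin n, (Seg.Pmat τ1 i j) * (Seg.Pmat τ2 i j)
      = ∑ ℓ ∈ range τ1.D, ∑ m ∈ range τ2.D,
          ((τ1.seg ℓ ∩ τ2.seg m).card : ℝ)^2
            * (((τ1.seg ℓ).card : ℝ)⁻¹ * ((τ2.seg m).card : ℝ)⁻¹) := by
  unfold Seg.Pmat
  simp_rw [Finset.sum_mul_sum]
  have e1 : ∀ (F : Fin n → Fin n → ℕ → ℕ → ℝ),
      (∑ i : Fin n, ∑ j : Fin n, ∑ ℓ ∈ range τ1.D, ∑ m ∈ range τ2.D, F i j ℓ m)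
        = ∑ ℓ ∈ range τ1.D, ∑ m ∈ range τ2.D, ∑ i : Fin n, ∑ j : Fin n, F i j ℓ m := by
    intro F
    calc (∑ i : Fin n, ∑ j : Fin n, ∑ ℓ ∈ range τ1.D, ∑ m ∈ range τ2.D, F i j ℓ m)
        = ∑ i : Fin n, ∑ ℓ ∈ range τ1.D, ∑ j : Fin n, ∑ m ∈ range τ2.D, F i j ℓ m :=
          Finset.sum_congr rfl fun i _ => Finset.sum_comm
      _ = ∑ i : Fin n, ∑ ℓ ∈ range τ1.D, ∑ m ∈ range τ2.D, ∑ j : Fin n, F i j ℓ m :=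
          Finset.sum_congr rfl fun i _ => Finset.sum_congr rfl fun ℓ _ => Finset.sum_comm
      _ = ∑ ℓ ∈ range τ1.D, ∑ i : Fin n, ∑ m ∈ range τ2.D, ∑ j : Fin n, F i j ℓ m :=
          Finset.sum_comm
      _ = ∑ ℓ ∈ range τ1.D, ∑ m ∈ range τ2.D, ∑ i : Fin n, ∑ j : Fin n, F i j ℓ m :=
          Finset.sum_congr rfl fun ℓ _ => Finset.sum_comm
  rw [e1]
  refine Finset.sum_congr rfl fun ℓ _ => Finset.sum_congr rfl fun m _ => ?_
  exact sum_pmat_aux _ _ _ _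

lemma seg_inter_card_zero (τ : Seg n) {ℓ m : ℕ} (hℓ : ℓ < τ.D) (hm : m < τ.D)
    (hne : ℓ ≠ m) : (τ.seg ℓ ∩ τ.seg m).card = 0 := by
  rw [seg_inter_card τ τ hℓ hm]
  rcases Nat.lt_or_ge ℓ m with h | h
  · have h1 : τ.t (ℓ+1) ≤ τ.t m := t_le τ (by omega) (by omega)
    omega
  · have h2 : τ.t (m+1) ≤ τ.t ℓ := t_le τ (by omega) (by omega)
    omega

lemma pmat_self_sum (τ : Seg n) :
    ∑ ℓ ∈ range τ.D, ∑ m ∈ range τ.D,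
        ((τ.seg ℓ ∩ τ.seg m).card : ℝ)^2
          * (((τ.seg ℓ).card : ℝ)⁻¹ * ((τ.seg m).card : ℝ)⁻¹) = τ.D := by
  have h1 : ∀ ℓ ∈ range τ.D,
      (∑ m ∈ range τ.D, ((τ.seg ℓ ∩ τ.seg m).card : ℝ)^2
        * (((τ.seg ℓ).card : ℝ)⁻¹ * ((τ.seg m).card : ℝ)⁻¹)) = 1 := by
    intro ℓ hℓ
    rw [mem_range] at hℓ
    rw [Finset.sum_eq_single ℓ]
    · rw [Finset.inter_self]
      have hc := seg_card_pos τ hℓ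
      have hc' : ((τ.seg ℓ).card : ℝ) ≠ 0 := by positivity
      field_simp
    · intro m hm hne
      rw [mem_range] at hm
      rw [seg_inter_card_zero τ hℓ hm (by omega)]
      simp
    · intro hcon; exact absurd (mem_range.mpr hℓ) hcon
  rw [Finset.sum_congr rfl h1, Finset.sum_const, card_range, nsmul_eq_mul, mul_one]

lemma align (τ1 τ2 : Seg n) (hD : τ1.D = τ2.D)
    (hgap : ∀ ℓ < τ1.D, 2 * Seg.dinf1 τ1 τ2 < τ1.t (ℓ+1) - τ1.t ℓ) :
    ∀ i ≤ τ1.D, Nat.dist (τ1.t i) (τ2.t i) ≤ Seg.dinf1 τ1 τ2 := by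
  set d := Seg.dinf1 τ1 τ2 with hd
  have hends : ∀ i ≤ τ1.D, i = 0 ∨ i = τ1.D → Nat.dist (τ1.t i) (τ2.t i) ≤ d := by
    intro i _ hi
    rcases hi with rfl | rfl
    · rw [τ1.h0, τ2.h0]; simp [Nat.dist]
    · rw [τ1.hn, hD, τ2.hn]; simp [Nat.dist]
  rcases Nat.lt_or_ge τ1.D 2 with hD2 | hD2
  · intro i hi
    have : i = 0 ∨ i = τ1.D := by have := τ1.hD; omega
    exact hends i hi this
  · have ne2 : (Finset.Ioo 0 τ2.D).Nonempty :=
      ⟨1, Finset.mem_Ioo.mpr ⟨Nat.one_pos, by omega⟩⟩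
    have hd_def : d = (Finset.Ioo 0 τ1.D).sup fun i =>
        (Finset.Ioo 0 τ2.D).inf' ne2 fun j => Nat.dist (τ1.t i) (τ2.t j) := by
      rw [hd, Seg.dinf1, dif_pos ⟨hD2, hD ▸ hD2⟩]
    have hex : ∀ i, 0 < i → i < τ1.D →
        ∃ j, 0 < j ∧ j < τ2.D ∧ Nat.dist (τ1.t i) (τ2.t j) ≤ d := by
      intro i h1 h2
      have hmem : i ∈ Finset.Ioo 0 τ1.D := Finset.mem_Ioo.mpr ⟨h1, h2⟩
      have hle : ((Finset.Ioo 0 τ2.D).inf' ne2 fun j => Nat.dist (τ1.t i) (τ2.t j)) ≤ d := by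
        rw [hd_def]
        exact Finset.le_sup (f := fun i => (Finset.Ioo 0 τ2.D).inf' ne2
          fun j => Nat.dist (τ1.t i) (τ2.t j)) hmem
      obtain ⟨j, hj, hjeq⟩ := Finset.exists_mem_eq_inf' ne2
        (fun j => Nat.dist (τ1.t i) (τ2.t j))
      rw [Finset.mem_Ioo] at hj
      exact ⟨j, hj.1, hj.2, by rw [hjeq] at hle; exact hle⟩
    have hex' : ∀ i, ∃ j, (0 < i ∧ i < τ1.D) →
        (0 < j ∧ j < τ2.D ∧ Nat.dist (τ1.t i) (τ2.t j) ≤ d) := by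
      intro i
      by_cases hc : 0 < i ∧ i < τ1.D
      · exact (hex i hc.1 hc.2).imp fun j hj _ => hj
      · exact ⟨0, fun hcc => absurd hcc hc⟩
    choose σ hσ using hex'
    have hmσ : ∀ i i', 0 < i → i < i' → i' < τ1.D → σ i < σ i' := by
      intro i i' h1 h2 h3
      obtain ⟨hj1, hj2, hj3⟩ := hσ i ⟨h1, by omega⟩
      obtain ⟨hk1, hk2, hk3⟩ := hσ i' ⟨by omega, h3⟩
      have hgap1 : 2*d < τ1.t (i+1) - τ1.t i := hgap i (by omega)
      have hmono1 : τ1.t (i+1) ≤ τ1.t i' := t_le τ1 (by omega) (by omega)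
      simp [Nat.dist] at hj3 hk3
      by_contra hcon
      push_neg at hcon
      have : τ2.t (σ i') ≤ τ2.t (σ i) := t_le τ2 hcon (by omega)
      omega
    have hge : ∀ i, 0 < i → i < τ1.D → i ≤ σ i := by
      intro i
      induction i with
      | zero => omega
      | succ k ih =>
        intro _ h2
        rcases Nat.eq_zero_or_pos k with rfl | hk
        · have := (hσ (0+1) ⟨by omega, h2⟩).1; omega
        · have ha := ih (by omega) (by omega)
          have hb := hmσ k (k+1) hk (by omega) h2
          omega
    have hle2 : ∀ k i, 0 < i → i < τ1.D → τ1.D - 1 - i ≤ k → σ i ≤ i := by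
      intro k
      induction k with
      | zero =>
        intro i h1 h2 h3
        have hh := (hσ i ⟨h1, h2⟩).2.1
        omega
      | succ k ih =>
        intro i h1 h2 h3
        rcases Nat.lt_or_ge (i+1) τ1.D with h4 | h4
        · have h5 := hmσ i (i+1) h1 (by omega) h4
          have h6 := ih (i+1) (by omega) h4 (by omega)
          omega
        · have hh := (hσ i ⟨h1, h2⟩).2.1; omega
    intro i hi
    rcases Nat.eq_zero_or_pos i with rfl | h1
    · exact hends 0 (by omega) (Or.inl rfl)
    rcases Nat.eq_or_lt_of_le hi with rfl | h2
    · exact hends τ1.D le_rfl (Or.inr rfl)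
    have hσi : σ i = i :=
      le_antisymm (hle2 τ1.D i h1 h2 (by omega)) (hge i h1 h2)
    have := (hσ i ⟨h1, h2⟩).2.2
    rwa [hσi] at this

/-- Proposition 3.5, upper bound: if `D_{τ¹} = D_{τ²}` and
`(1/n) d∞^{(1)}(τ¹,τ²) < Λ̲_{τ¹}/2`, then
`d_F(τ¹,τ²)² ≤ (12 D_{τ¹} / Λ̲_{τ¹}) · (1/n) d∞^{(1)}(τ¹,τ²)`. -/
theorem dF_sq_le_dinf1 {n : ℕ} (τ1 τ2 : Seg n) (hD : τ1.D = τ2.D)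
    (h : (Seg.dinf1 τ1 τ2 : ℝ) / n < Seg.lamMin τ1 / 2) :
    (Seg.dF τ1 τ2) ^ 2
      ≤ 12 * (τ1.D : ℝ) / Seg.lamMin τ1 * ((Seg.dinf1 τ1 τ2 : ℝ) / n) := by
  classical
  set d : ℕ := Seg.dinf1 τ1 τ2 with hd
  have hnpos : 0 < n := by
    have h1 := t_lt τ1 0 τ1.D τ1.hD le_rfl
    rw [τ1.h0, τ1.hn] at h1; exact h1
  set M : ℕ := ((Finset.range τ1.D).inf' (Finset.nonempty_range_iff.mpr τ1.hD.ne')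
      fun ℓ => τ1.t (ℓ + 1) - τ1.t ℓ) with hM
  have hlam : Seg.lamMin τ1 = (M:ℝ)/n := rfl
  have hM_le : ∀ ℓ < τ1.D, M ≤ τ1.t (ℓ+1) - τ1.t ℓ := fun ℓ hℓ =>
    Finset.inf'_le _ (Finset.mem_range.mpr hℓ)
  have hMpos : 0 < M := by
    obtain ⟨ℓ, hℓ, hins⟩ := Finset.exists_mem_eq_inf'
      (Finset.nonempty_range_iff.mpr τ1.hD.ne') (fun ℓ => τ1.t (ℓ + 1) - τ1.t ℓ)
    rw [Finset.mem_range] at hℓ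
    have := τ1.hmono ℓ hℓ
    rw [hM, hins]
    omega
  have hn' : (0:ℝ) < n := by exact_mod_cast hnpos
  have h2d : 2*d < M := by
    rw [hlam, div_div, div_lt_div_iff₀ hn' (by positivity)] at h
    have : (d:ℝ) * (n*2) < (M:ℝ) * n := h
    have hnat : d * (n*2) < M * n := by exact_mod_cast this
    nlinarith
  have hgap : ∀ ℓ < τ1.D, 2*d < τ1.t (ℓ+1) - τ1.t ℓ := fun ℓ hℓ =>
    lt_of_lt_of_le h2d (hM_le ℓ hℓ)
  have hal := align τ1 τ2 hD hgap
  have hsum_nonneg : (0:ℝ) ≤ ∑ i : Fin n, ∑ j : Fin n,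
      (Seg.Pmat τ1 i j - Seg.Pmat τ2 i j)^2 := by positivity
  have hdF2 : (Seg.dF τ1 τ2)^2 = ∑ i : Fin n, ∑ j : Fin n,
      (Seg.Pmat τ1 i j - Seg.Pmat τ2 i j)^2 := Real.sq_sqrt hsum_nonneg
  set S : ℝ := ∑ ℓ ∈ Finset.range τ1.D, ∑ m ∈ Finset.range τ2.D,
      ((τ1.seg ℓ ∩ τ2.seg m).card:ℝ)^2
        * (((τ1.seg ℓ).card:ℝ)⁻¹ * ((τ2.seg m).card:ℝ)⁻¹) with hS
  have hexp : (∑ i : Fin n, ∑ j : Fin n, (Seg.Pmat τ1 i j - Seg.Pmat τ2 i j)^2)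
      = (∑ i : Fin n, ∑ j : Fin n, Seg.Pmat τ1 i j * Seg.Pmat τ1 i j)
        + (∑ i : Fin n, ∑ j : Fin n, Seg.Pmat τ2 i j * Seg.Pmat τ2 i j)
        - 2*(∑ i : Fin n, ∑ j : Fin n, Seg.Pmat τ1 i j * Seg.Pmat τ2 i j) := by
    have hpt : ∀ i j : Fin n, (Seg.Pmat τ1 i j - Seg.Pmat τ2 i j)^2
        = Seg.Pmat τ1 i j * Seg.Pmat τ1 i j + Seg.Pmat τ2 i j * Seg.Pmat τ2 i j
          - 2*(Seg.Pmat τ1 i j * Seg.Pmat τ2 i j) := by intros; ring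
    simp_rw [hpt, Finset.sum_sub_distrib, Finset.sum_add_distrib, Finset.mul_sum]
  have e1 : (∑ i : Fin n, ∑ j : Fin n, Seg.Pmat τ1 i j * Seg.Pmat τ1 i j) = (τ1.D : ℝ) :=
    (pmat_prod_sum τ1 τ1).trans (pmat_self_sum τ1)
  have e2 : (∑ i : Fin n, ∑ j : Fin n, Seg.Pmat τ2 i j * Seg.Pmat τ2 i j) = (τ2.D : ℝ) :=
    (pmat_prod_sum τ2 τ2).trans (pmat_self_sum τ2)
  have e3 : (∑ i : Fin n, ∑ j : Fin n, Seg.Pmat τ1 i j * Seg.Pmat τ2 i j) = S :=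
    pmat_prod_sum τ1 τ2
  have hdiag : ∑ ℓ ∈ Finset.range τ1.D, ((τ1.seg ℓ ∩ τ2.seg ℓ).card:ℝ)^2
      * (((τ1.seg ℓ).card:ℝ)⁻¹ * ((τ2.seg ℓ).card:ℝ)⁻¹) ≤ S := by
    rw [hS]
    apply Finset.sum_le_sum
    intro ℓ hℓ
    apply Finset.single_le_sum (f := fun m => ((τ1.seg ℓ ∩ τ2.seg m).card:ℝ)^2
      * (((τ1.seg ℓ).card:ℝ)⁻¹ * ((τ2.seg m).card:ℝ)⁻¹))
      (fun m _ => by positivity)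
    exact Finset.mem_range.mpr (hD ▸ Finset.mem_range.mp hℓ)
  have hper : ∀ ℓ ∈ Finset.range τ1.D,
      2 - 2*(((τ1.seg ℓ ∩ τ2.seg ℓ).card:ℝ)^2
        * (((τ1.seg ℓ).card:ℝ)⁻¹ * ((τ2.seg ℓ).card:ℝ)⁻¹)) ≤ 12*(d:ℝ)/M := by
    intro ℓ hℓ
    rw [Finset.mem_range] at hℓ
    have hℓ2 : ℓ < τ2.D := hD ▸ hℓ
    have hc1 := seg_card τ1 hℓ
    have hc2 := seg_card τ2 hℓ2
    have hci := seg_inter_card τ1 τ2 hℓ hℓ2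
    have ha1 := hal ℓ (by omega)
    have ha2 := hal (ℓ+1) (by omega)
    have hm1 := τ1.hmono ℓ hℓ
    have hm2 := τ2.hmono ℓ hℓ2
    have hg := hgap ℓ hℓ
    simp only [Nat.dist] at ha1 ha2
    have n1 : (τ1.seg ℓ).card ≤ (τ1.seg ℓ ∩ τ2.seg ℓ).card + 2*d := by omega
    have n2 : (τ2.seg ℓ).card ≤ (τ1.seg ℓ).card + 2*d := by omega
    have n3 : 1 ≤ (τ1.seg ℓ).card := by omega
    have n4 : 1 ≤ (τ2.seg ℓ).card := by omega
    have n5 : 2*d < (τ1.seg ℓ).card := by omega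
    have hkey := key_ineq ((τ1.seg ℓ).card : ℝ) ((τ2.seg ℓ).card : ℝ)
      ((τ1.seg ℓ ∩ τ2.seg ℓ).card : ℝ) (d : ℝ)
      (by exact_mod_cast n3) (by exact_mod_cast n4) (by positivity)
      (by positivity) (by exact_mod_cast n1) (by exact_mod_cast n2)
      (by exact_mod_cast n5)
    refine hkey.trans ?_
    apply div_le_div_of_nonneg_left (by positivity) (by exact_mod_cast hMpos)
    have : M ≤ (τ1.seg ℓ).card := by have := hM_le ℓ hℓ; omega
    exact_mod_cast this
  have hsum2 : ∑ ℓ ∈ Finset.range τ1.D,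
      (2 - 2*(((τ1.seg ℓ ∩ τ2.seg ℓ).card:ℝ)^2
        * (((τ1.seg ℓ).card:ℝ)⁻¹ * ((τ2.seg ℓ).card:ℝ)⁻¹))) ≤ (τ1.D:ℝ) * (12*(d:ℝ)/M) := by
    calc _ ≤ ∑ _ℓ ∈ Finset.range τ1.D, 12*(d:ℝ)/M := Finset.sum_le_sum hper
    _ = (τ1.D:ℝ) * (12*(d:ℝ)/M) := by
        rw [Finset.sum_const, Finset.card_range, nsmul_eq_mul]
  have hXsum : ∑ ℓ ∈ Finset.range τ1.D,
      (2 - 2*(((τ1.seg ℓ ∩ τ2.seg ℓ).card:ℝ)^2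
        * (((τ1.seg ℓ).card:ℝ)⁻¹ * ((τ2.seg ℓ).card:ℝ)⁻¹)))
      = 2*(τ1.D:ℝ) - 2*(∑ ℓ ∈ Finset.range τ1.D, ((τ1.seg ℓ ∩ τ2.seg ℓ).card:ℝ)^2
        * (((τ1.seg ℓ).card:ℝ)⁻¹ * (((τ2.seg ℓ).card:ℝ))⁻¹)) := by
    rw [Finset.sum_sub_distrib, Finset.sum_const, Finset.card_range, ← Finset.mul_sum]
    push_cast; ring
  have hD' : (τ2.D:ℝ) = (τ1.D:ℝ) := by exact_mod_cast hD.symm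
  have hfin : (12:ℝ) * (τ1.D:ℝ) / Seg.lamMin τ1 * ((d:ℝ)/n) = (τ1.D:ℝ) * (12*(d:ℝ)/M) := by
    rw [hlam]
    have hM0 : (M:ℝ) ≠ 0 := by positivity
    have hn0 : (n:ℝ) ≠ 0 := by positivity
    field_simp
  rw [hdF2, hexp, e1, e2, e3, hD', hfin]
  linarith [hdiag, hsum2, hXsum]
end

section
/- Let τ¹, τ² ∈ T_n be segmentations with D_{τ¹} = D_{τ²} and (1/n) d∞^{(1)}(τ¹,τ²) < Λ̲_{τ¹}/3. Then (2 / (3 Λ̄_{τ¹})) · (1/n) d∞^{(1)}(τ¹,τ²) ≤ d_F(τ¹,τ²)². -/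
open MeasureTheory ProbabilityTheory

private lemma Seg.t_lt_t_s9 {n : ℕ} (τ : Seg n) : ∀ {a b : ℕ}, a < b → b ≤ τ.D → τ.t a < τ.t b := by
  intro a b hab hb
  induction b with
  | zero => omega
  | succ b ih =>
    rcases Nat.lt_or_ge a b with h' | h'
    · exact lt_trans (ih h' (by omega)) (τ.hmono b (by omega))
    · have hab' : a = b := by omega
      subst hab'; exact τ.hmono a (by omega)

private lemma Seg.t_le_t_s9 {n : ℕ} (τ : Seg n) {a b : ℕ} (hab : a ≤ b) (hb : b ≤ τ.D) :
    τ.t a ≤ τ.t b := by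
  rcases eq_or_lt_of_le hab with rfl | h'
  · exact le_refl _
  · exact (τ.t_lt_t_s9 h' hb).le

private lemma card_filter_ico (n a b : ℕ) (hb : b ≤ n) :
    (Finset.univ.filter fun i : Fin n => a ≤ (i : ℕ) ∧ (i : ℕ) < b).card = b - a := by
  rw [← Nat.card_Ico]
  apply Finset.card_bij (fun (i : Fin n) _ => (i : ℕ))
  · intro i hi; simp at hi ⊢; omega
  · intro i _ j _ hij; exact Fin.ext hij
  · intro m hm; simp at hm
    exact ⟨⟨m, by omega⟩, by simp; omega, rfl⟩

set_option maxHeartbeats 1600000 in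
/-- Proposition 3.5, lower bound: if `D_{τ¹} = D_{τ²}` and
`(1/n) d∞^{(1)}(τ¹,τ²) < Λ̲_{τ¹}/3`, then
`(2 / (3 Λ̄_{τ¹})) · (1/n) d∞^{(1)}(τ¹,τ²) ≤ d_F(τ¹,τ²)²`. -/
theorem dinf1_le_dF_sq {n : ℕ} (τ1 τ2 : Seg n) (hD : τ1.D = τ2.D)
    (h : (Seg.dinf1 τ1 τ2 : ℝ) / n < Seg.lamMin τ1 / 3) :
    2 / (3 * Seg.lamMax τ1) * ((Seg.dinf1 τ1 τ2 : ℝ) / n) ≤ (Seg.dF τ1 τ2) ^ 2 := by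
  have hsum_nonneg : (0:ℝ) ≤ ∑ i, ∑ j, (Seg.Pmat τ1 i j - Seg.Pmat τ2 i j) ^ 2 :=
    Finset.sum_nonneg fun i _ => Finset.sum_nonneg fun j _ => sq_nonneg _
  have hdF : (Seg.dF τ1 τ2) ^ 2 = ∑ i, ∑ j, (Seg.Pmat τ1 i j - Seg.Pmat τ2 i j) ^ 2 := by
    rw [Seg.dF]; exact Real.sq_sqrt hsum_nonneg
  rcases Nat.eq_zero_or_pos (Seg.dinf1 τ1 τ2) with hd0 | hdpos
  · rw [hd0]
    simpa using hdF ▸ hsum_nonneg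
  -- nondegenerate case
  have hD2 : 2 ≤ τ1.D ∧ 2 ≤ τ2.D := by
    by_contra hc
    rw [Seg.dinf1, dif_neg hc, if_pos hD] at hdpos; omega
  set d := Seg.dinf1 τ1 τ2 with hd_def
  set Lmin : ℕ := (Finset.range τ1.D).inf' (Finset.nonempty_range_iff.mpr τ1.hD.ne')
      (fun ℓ => τ1.t (ℓ + 1) - τ1.t ℓ) with hLmin_def
  set Lmax : ℕ := (Finset.range τ1.D).sup' (Finset.nonempty_range_iff.mpr τ1.hD.ne')
      (fun ℓ => τ1.t (ℓ + 1) - τ1.t ℓ) with hLmax_def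
  have hn : 0 < n := by
    have := τ1.t_lt_t_s9 τ1.hD (le_refl _)
    rw [τ1.h0, τ1.hn] at this; omega
  have hnR : (0:ℝ) < n := by exact_mod_cast hn
  -- 3d < Lmin
  have h3d : 3 * d < Lmin := by
    have h' : (d:ℝ) / n < ((Lmin:ℝ) / n) / 3 := by rwa [Seg.lamMin] at h
    have : (3:ℝ) * d < Lmin := by
      rw [div_div, div_lt_div_iff₀ hnR (by positivity)] at h'
      nlinarith
    exact_mod_cast this
  have hlen_min : ∀ ℓ < τ1.D, Lmin ≤ τ1.t (ℓ + 1) - τ1.t ℓ := fun ℓ hℓ =>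
    Finset.inf'_le _ (Finset.mem_range.mpr hℓ)
  have hlen_max : ∀ ℓ < τ1.D, τ1.t (ℓ + 1) - τ1.t ℓ ≤ Lmax := fun ℓ hℓ =>
    Finset.le_sup' (fun ℓ => τ1.t (ℓ + 1) - τ1.t ℓ) (Finset.mem_range.mpr hℓ)
  -- the maximizing change-point
  have hIoo1 : (Finset.Ioo 0 τ1.D).Nonempty := ⟨1, Finset.mem_Ioo.mpr ⟨Nat.one_pos, by omega⟩⟩
  obtain ⟨i, hi_mem, hi_eq⟩ := Finset.exists_mem_eq_sup (Finset.Ioo 0 τ1.D) hIoo1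
    (fun i => (Finset.Ioo 0 τ2.D).inf' ⟨1, Finset.mem_Ioo.mpr ⟨Nat.one_pos, by omega⟩⟩
        fun j => Nat.dist (τ1.t i) (τ2.t j))
  have hd_eq : d = (Finset.Ioo 0 τ2.D).inf' ⟨1, Finset.mem_Ioo.mpr ⟨Nat.one_pos, by omega⟩⟩
      (fun j => Nat.dist (τ1.t i) (τ2.t j)) := by
    rw [hd_def, Seg.dinf1, dif_pos hD2, hi_eq]
  rw [Finset.mem_Ioo] at hi_mem
  obtain ⟨hi0, hiD⟩ := hi_mem
  set t := τ1.t i with ht_def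
  have hfar : ∀ j, 0 < j → j < τ2.D → d ≤ Nat.dist t (τ2.t j) := by
    intro j hj0 hjD
    rw [hd_eq]
    exact Finset.inf'_le _ (Finset.mem_Ioo.mpr ⟨hj0, hjD⟩)
  have hclose : ∀ i', 0 < i' → i' < τ1.D →
      ∃ j, 0 < j ∧ j < τ2.D ∧ Nat.dist (τ1.t i') (τ2.t j) ≤ d := by
    intro i' h0' hD'
    have hle : (Finset.Ioo 0 τ2.D).inf' ⟨1, Finset.mem_Ioo.mpr ⟨Nat.one_pos, by omega⟩⟩
        (fun j => Nat.dist (τ1.t i') (τ2.t j)) ≤ d := by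
      rw [hd_def, Seg.dinf1, dif_pos hD2]
      exact Finset.le_sup (f := fun i => (Finset.Ioo 0 τ2.D).inf'
        ⟨1, Finset.mem_Ioo.mpr ⟨Nat.one_pos, by omega⟩⟩
        fun j => Nat.dist (τ1.t i) (τ2.t j)) (Finset.mem_Ioo.mpr ⟨h0', hD'⟩)
    obtain ⟨j, hj, hjeq⟩ := Finset.exists_mem_eq_inf' (⟨1, Finset.mem_Ioo.mpr
      ⟨Nat.one_pos, by omega⟩⟩ : (Finset.Ioo 0 τ2.D).Nonempty)
      (fun j => Nat.dist (τ1.t i') (τ2.t j))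
    rw [Finset.mem_Ioo] at hj
    exact ⟨j, hj.1, hj.2, by rw [← hjeq]; exact hle⟩
  -- bounds on t
  have ht_lb : Lmin ≤ t := by
    have h1 : τ1.t (0 + 1) ≤ t := τ1.t_le_t_s9 hi0 (by omega)
    have := hlen_min 0 (by omega)
    rw [τ1.h0] at this; omega
  have ht_ub : t + Lmin ≤ n := by
    have h1 : τ1.t (i+1) ≤ τ1.t τ1.D := τ1.t_le_t_s9 (by omega) (le_refl _)
    have h2 := hlen_min i hiD
    have h3 := τ1.hmono i hiD
    rw [τ1.hn] at h1; omega
  -- find the τ2 segment [s, s') containing [t-d, t+d)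
  obtain ⟨k, hkle, hks, hkmax⟩ : ∃ k, k ≤ τ2.D ∧ τ2.t k + d ≤ t ∧
      (∀ m, m ≤ τ2.D → τ2.t m + d ≤ t → m ≤ k) := by
    classical
    refine ⟨Nat.findGreatest (fun ℓ => τ2.t ℓ + d ≤ t) τ2.D,
      Nat.findGreatest_le _, ?_, fun m hm hmt => Nat.le_findGreatest hm hmt⟩
    exact Nat.findGreatest_spec (P := fun ℓ => τ2.t ℓ + d ≤ t) (Nat.zero_le _)
      (by show τ2.t 0 + d ≤ t; rw [τ2.h0]; omega)
  have ht_le_n : t ≤ n := by omega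
  have hkD : k < τ2.D := by
    rcases Nat.lt_or_ge k τ2.D with h' | h'
    · exact h'
    · exfalso
      have : k = τ2.D := by omega
      rw [this, τ2.hn] at hks; omega
  set s := τ2.t k with hs_def
  set s' := τ2.t (k + 1) with hs'_def
  have hss' : s < s' := τ2.hmono k hkD
  have hs'_le_n : s' ≤ n := by
    have := τ2.t_le_t_s9 (Nat.succ_le_of_lt hkD) (le_refl _)
    rwa [τ2.hn] at this
  have hs'_ge : t + d ≤ s' := by
    rcases Nat.lt_or_ge (k+1) τ2.D with h' | h'
    · have hfar' := hfar (k+1) (by omega) h'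
      have hnear : ¬ (τ2.t (k+1) + d ≤ t) := by
        intro hc
        have := hkmax (k+1) (by omega) hc
        omega
      have hdist : Nat.dist t (τ2.t (k+1)) = t - τ2.t (k+1) + (τ2.t (k+1) - t) := rfl
      omega
    · have : k + 1 = τ2.D := by omega
      rw [hs'_def, this, τ2.hn]
      omega
  -- length of the τ2 segment
  have hL_ub : s' - s ≤ Lmax + 2 * d := by
    obtain ⟨p, hple, hps, hpmax⟩ : ∃ p, p ≤ τ1.D ∧ τ1.t p ≤ s + d ∧
        (∀ m, m ≤ τ1.D → τ1.t m ≤ s + d → m ≤ p) := by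
      classical
      refine ⟨Nat.findGreatest (fun ℓ => τ1.t ℓ ≤ s + d) τ1.D,
        Nat.findGreatest_le _, ?_, fun m hm hmt => Nat.le_findGreatest hm hmt⟩
      exact Nat.findGreatest_spec (P := fun ℓ => τ1.t ℓ ≤ s + d) (Nat.zero_le _)
        (by show τ1.t 0 ≤ s + d; rw [τ1.h0]; omega)
    rcases Nat.lt_or_ge p τ1.D with hpD | hpD
    · have hu_gt : s + d < τ1.t (p+1) := by
        rcases Nat.lt_or_ge (s + d) (τ1.t (p+1)) with h' | h'
        · exact h'
        · exfalso
          have := hpmax (p+1) (by omega) h'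
          omega
      have hu_ub : τ1.t (p+1) ≤ s + d + Lmax := by
        have h1 := hlen_max p hpD
        have h2 := τ1.hmono p hpD
        omega
      rcases Nat.lt_or_ge (p+1) τ1.D with hp1D | hp1D
      · obtain ⟨j, hj0, hjD, hjdist⟩ := hclose (p+1) (by omega) hp1D
        have hdist : Nat.dist (τ1.t (p+1)) (τ2.t j) =
            τ1.t (p+1) - τ2.t j + (τ2.t j - τ1.t (p+1)) := rfl
        rcases le_or_gt j k with hjk | hjk
        · have : τ2.t j ≤ s := τ2.t_le_t_s9 hjk (by omega)
          omega
        · have : s' ≤ τ2.t j := τ2.t_le_t_s9 hjk (by omega)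
          omega
      · have : p + 1 = τ1.D := by omega
        have : τ1.t (p+1) = n := by rw [this, τ1.hn]
        omega
    · have : p = τ1.D := by omega
      have : τ1.t p = n := by rw [this, τ1.hn]
      omega
  -- matrix entry computations
  set L := s' - s with hL_def
  have hP2 : ∀ p q : Fin n, s ≤ (p:ℕ) → (p:ℕ) < s' → s ≤ (q:ℕ) → (q:ℕ) < s' →
      Seg.Pmat τ2 p q = ((L:ℕ):ℝ)⁻¹ := by
    intro p q hp1 hp2 hq1 hq2
    rw [Seg.Pmat, Finset.sum_eq_single k]
    · rw [if_pos, Seg.seg, card_filter_ico n s s' hs'_le_n]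
      constructor <;>
        · rw [Seg.seg, Finset.mem_filter]
          exact ⟨Finset.mem_univ _, by constructor <;> assumption⟩
    · intro ℓ hℓ hℓk
      rw [Finset.mem_range] at hℓ
      rw [if_neg]
      rintro ⟨hpseg, -⟩
      rw [Seg.seg, Finset.mem_filter] at hpseg
      obtain ⟨-, hp3, hp4⟩ := hpseg
      rcases Nat.lt_or_ge ℓ k with h' | h'
      · have : τ2.t (ℓ+1) ≤ s := τ2.t_le_t_s9 h' (by omega)
        omega
      · have hℓk' : k + 1 ≤ ℓ := by omega
        have : s' ≤ τ2.t ℓ := τ2.t_le_t_s9 hℓk' (by omega)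
        omega
    · intro hc
      exact absurd (Finset.mem_range.mpr hkD) hc
  have hP1symm : ∀ p q : Fin n, Seg.Pmat τ1 p q = Seg.Pmat τ1 q p := by
    intro p q
    unfold Seg.Pmat
    exact Finset.sum_congr rfl fun ℓ _ => if_congr and_comm rfl rfl
  have hP1 : ∀ p q : Fin n, (p:ℕ) < t → t ≤ (q:ℕ) → Seg.Pmat τ1 p q = 0 := by
    intro p q hp hq
    rw [Seg.Pmat]
    apply Finset.sum_eq_zero
    intro ℓ hℓ
    rw [Finset.mem_range] at hℓ
    rw [if_neg]
    rintro ⟨hpseg, hqseg⟩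
    rw [Seg.seg, Finset.mem_filter] at hpseg hqseg
    obtain ⟨-, hp3, hp4⟩ := hpseg
    obtain ⟨-, hq3, hq4⟩ := hqseg
    have hℓi : ℓ < i := by
      by_contra hc
      have : t ≤ τ1.t ℓ := τ1.t_le_t_s9 (by omega) (by omega)
      omega
    have : τ1.t (ℓ+1) ≤ t := τ1.t_le_t_s9 hℓi (by omega)
    omega
  -- the index sets
  set I1 := Finset.univ.filter (fun p : Fin n => s ≤ (p:ℕ) ∧ (p:ℕ) < t) with hI1_def
  set J1 := Finset.univ.filter (fun p : Fin n => t ≤ (p:ℕ) ∧ (p:ℕ) < s') with hJ1_def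
  have hI1card : I1.card = t - s := card_filter_ico n s t ht_le_n
  have hJ1card : J1.card = s' - t := card_filter_ico n t s' hs'_le_n
  have hdisj : Disjoint I1 J1 := by
    rw [Finset.disjoint_left]
    intro a ha hb
    rw [hI1_def, Finset.mem_filter] at ha
    rw [hJ1_def, Finset.mem_filter] at hb
    omega
  have hFval : ∀ p ∈ I1, ∀ q ∈ J1,
      (Seg.Pmat τ1 p q - Seg.Pmat τ2 p q) ^ 2 = (((L:ℕ):ℝ)⁻¹) ^ 2 := by
    intro p hp q hq
    rw [hI1_def, Finset.mem_filter] at hp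
    rw [hJ1_def, Finset.mem_filter] at hq
    rw [hP1 p q hp.2.2 hq.2.1, hP2 p q hp.2.1 (by omega) (by omega) hq.2.2]
    ring
  have hFval' : ∀ p ∈ J1, ∀ q ∈ I1,
      (Seg.Pmat τ1 p q - Seg.Pmat τ2 p q) ^ 2 = (((L:ℕ):ℝ)⁻¹) ^ 2 := by
    intro p hp q hq
    rw [hJ1_def, Finset.mem_filter] at hp
    rw [hI1_def, Finset.mem_filter] at hq
    rw [hP1symm, hP1 q p hq.2.2 hp.2.1, hP2 p q (by omega) hp.2.2 hq.2.1 (by omega)]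
    ring
  -- lower bound on the double sum
  have hsum_lb : ((t - s : ℕ):ℝ) * ((s' - t : ℕ):ℝ) * (((L:ℕ):ℝ)⁻¹) ^ 2 * 2 ≤
      ∑ p, ∑ q, (Seg.Pmat τ1 p q - Seg.Pmat τ2 p q) ^ 2 := by
    have hterm_nonneg : ∀ p : Fin n, (0:ℝ) ≤ ∑ q, (Seg.Pmat τ1 p q - Seg.Pmat τ2 p q) ^ 2 :=
      fun p => Finset.sum_nonneg fun q _ => sq_nonneg _
    have step1 : ∑ p ∈ I1 ∪ J1, ∑ q, (Seg.Pmat τ1 p q - Seg.Pmat τ2 p q) ^ 2 ≤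
        ∑ p, ∑ q, (Seg.Pmat τ1 p q - Seg.Pmat τ2 p q) ^ 2 :=
      Finset.sum_le_sum_of_subset_of_nonneg (Finset.subset_univ _)
        (fun p _ _ => hterm_nonneg p)
    rw [Finset.sum_union hdisj] at step1
    have step2 : ∑ p ∈ I1, ((J1.card : ℝ) * (((L:ℕ):ℝ)⁻¹) ^ 2) ≤
        ∑ p ∈ I1, ∑ q, (Seg.Pmat τ1 p q - Seg.Pmat τ2 p q) ^ 2 := by
      apply Finset.sum_le_sum
      intro p hp
      calc (J1.card : ℝ) * (((L:ℕ):ℝ)⁻¹) ^ 2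
          = ∑ q ∈ J1, (Seg.Pmat τ1 p q - Seg.Pmat τ2 p q) ^ 2 := by
            rw [Finset.sum_congr rfl (fun q hq => hFval p hp q hq), Finset.sum_const,
              nsmul_eq_mul]
        _ ≤ ∑ q, (Seg.Pmat τ1 p q - Seg.Pmat τ2 p q) ^ 2 :=
            Finset.sum_le_sum_of_subset_of_nonneg (Finset.subset_univ _)
              (fun q _ _ => sq_nonneg _)
    have step3 : ∑ p ∈ J1, ((I1.card : ℝ) * (((L:ℕ):ℝ)⁻¹) ^ 2) ≤
        ∑ p ∈ J1, ∑ q, (Seg.Pmat τ1 p q - Seg.Pmat τ2 p q) ^ 2 := by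
      apply Finset.sum_le_sum
      intro p hp
      calc (I1.card : ℝ) * (((L:ℕ):ℝ)⁻¹) ^ 2
          = ∑ q ∈ I1, (Seg.Pmat τ1 p q - Seg.Pmat τ2 p q) ^ 2 := by
            rw [Finset.sum_congr rfl (fun q hq => hFval' p hp q hq), Finset.sum_const,
              nsmul_eq_mul]
        _ ≤ ∑ q, (Seg.Pmat τ1 p q - Seg.Pmat τ2 p q) ^ 2 :=
            Finset.sum_le_sum_of_subset_of_nonneg (Finset.subset_univ _)
              (fun q _ _ => sq_nonneg _)
    rw [Finset.sum_const, nsmul_eq_mul, hI1card, hJ1card] at step2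
    rw [Finset.sum_const, nsmul_eq_mul, hI1card, hJ1card] at step3
    calc ((t - s : ℕ):ℝ) * ((s' - t : ℕ):ℝ) * (((L:ℕ):ℝ)⁻¹) ^ 2 * 2
        = ((t - s : ℕ):ℝ) * (((s' - t : ℕ):ℝ) * (((L:ℕ):ℝ)⁻¹) ^ 2) +
          ((s' - t : ℕ):ℝ) * (((t - s : ℕ):ℝ) * (((L:ℕ):ℝ)⁻¹) ^ 2) := by ring
      _ ≤ _ := by
          apply le_trans _ step1
          exact add_le_add step2 step3
  -- final arithmetic
  rw [hdF]
  have hLmaxR : (0:ℝ) < (Lmax:ℝ) := by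
    have h1 : Lmin ≤ Lmax := le_trans (hlen_min 0 (by omega)) (hlen_max 0 (by omega))
    have : 0 < Lmax := by omega
    exact_mod_cast this
  have hgoal_eq : 2 / (3 * Seg.lamMax τ1) * ((d:ℝ) / n) = 2 * d / (3 * Lmax) := by
    rw [Seg.lamMax, ← hLmax_def]
    field_simp
  rw [hgoal_eq]
  apply le_trans _ hsum_lb
  -- cast nat facts to ℝ
  have hα : (d:ℝ) ≤ ((t - s : ℕ):ℝ) := by exact_mod_cast (by omega : d ≤ t - s)
  have hβ : (d:ℝ) ≤ ((s' - t : ℕ):ℝ) := by exact_mod_cast (by omega : d ≤ s' - t)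
  have hLeq : ((L:ℕ):ℝ) = ((t - s : ℕ):ℝ) + ((s' - t : ℕ):ℝ) := by
    rw [hL_def]
    exact_mod_cast (by omega : s' - s = (t - s) + (s' - t))
  have hLub : ((L:ℕ):ℝ) ≤ (Lmax:ℝ) + 2 * d := by
    rw [hL_def]
    exact_mod_cast (by omega : s' - s ≤ Lmax + 2 * d)
  have hdR : (1:ℝ) ≤ (d:ℝ) := by exact_mod_cast hdpos
  have hMd : 3 * (d:ℝ) < (Lmax:ℝ) := by
    have h1 : Lmin ≤ Lmax := le_trans (hlen_min 0 (by omega)) (hlen_max 0 (by omega))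
    exact_mod_cast (by omega : 3 * d < Lmax)
  have hLpos : (0:ℝ) < ((L:ℕ):ℝ) := by
    have : 0 < L := by omega
    exact_mod_cast this
  set α := ((t - s : ℕ):ℝ)
  set β := ((s' - t : ℕ):ℝ)
  set LR := ((L:ℕ):ℝ)
  have hLne : LR ≠ 0 := ne_of_gt hLpos
  have hshape : α * β * (LR⁻¹) ^ 2 * 2 = 2 * (α * β) / LR ^ 2 := by
    field_simp
  rw [hshape, div_le_div_iff₀ (by positivity) (by positivity), hLeq]
  have hd0 : (0:ℝ) ≤ (d:ℝ) := by positivity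
  have hB1 : (0:ℝ) ≤ α + β - 2 * d := by linarith
  have hB2 : (0:ℝ) ≤ (Lmax:ℝ) + 2 * d - (α + β) := by linarith
  have hC2 : (0:ℝ) ≤ (Lmax:ℝ) - 2 * d := by linarith
  have hD2' : (0:ℝ) ≤ 3 * (Lmax:ℝ) - 4 * d := by linarith
  nlinarith [mul_nonneg (mul_nonneg (sub_nonneg.mpr hα) (sub_nonneg.mpr hβ)) hLmaxR.le,
    mul_nonneg hd0 (mul_nonneg hB1 hB2),
    mul_nonneg hd0 (mul_nonneg hB1 hC2),
    mul_nonneg (mul_nonneg hd0 hd0) hD2']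
end

section
/- Let μ* ∈ H^n be non-constant with true segmentation τ*, and let τ ∈ T_n be any segmentation with D_τ < D_{τ*}. Then (1/n)‖μ* − Π_τ μ*‖² ≥ (1/2) Λ̲_{τ*} Δ̲². -/
open MeasureTheory ProbabilityTheory

namespace SegAux

variable {n : ℕ}

lemma t_mono (τ : Seg n) : ∀ {i j : ℕ}, i ≤ j → j ≤ τ.D → τ.t i ≤ τ.t j := by
  intro i j hij hj
  induction j with
  | zero =>
    have : i = 0 := by omega
    subst this; exact le_refl _
  | succ j ih =>
    rcases Nat.eq_or_lt_of_le hij with rfl | h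
    · exact le_refl _
    · have h1 := τ.hmono j (by omega)
      have h2 := ih (by omega) (by omega)
      omega

lemma t_strict (τ : Seg n) {i j : ℕ} (h : i < j) (hj : j ≤ τ.D) : τ.t i < τ.t j := by
  have h1 : τ.t i ≤ τ.t (j - 1) := t_mono τ (by omega) (by omega)
  have h2 := τ.hmono (j - 1) (by omega)
  have h3 : j - 1 + 1 = j := by omega
  rw [h3] at h2
  omega

lemma t_le_n (τ : Seg n) {i : ℕ} (hi : i ≤ τ.D) : τ.t i ≤ n := by
  have := t_mono τ hi (le_refl _)
  rw [τ.hn] at this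
  exact this

lemma t_inj (τ : Seg n) {i j : ℕ} (hi : i ≤ τ.D) (hj : j ≤ τ.D) (h : τ.t i = τ.t j) : i = j := by
  rcases lt_trichotomy i j with hlt | he | hgt
  · have := t_strict τ hlt hj; omega
  · exact he
  · have := t_strict τ hgt hi; omega

lemma exists_seg (τ : Seg n) {x : ℕ} (hx : x < n) :
    ∃ j, j < τ.D ∧ τ.t j ≤ x ∧ x < τ.t (j + 1) := by
  classical
  have hP0 : τ.t 0 ≤ x := by rw [τ.h0]; omega
  set j := Nat.findGreatest (fun j => τ.t j ≤ x) τ.D with hj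
  have hjD : j ≤ τ.D := Nat.findGreatest_le _
  have hPj : τ.t j ≤ x :=
    Nat.findGreatest_spec (P := fun j => τ.t j ≤ x) (Nat.zero_le _) hP0
  have hjne : j ≠ τ.D := by
    intro h; rw [h, τ.hn] at hPj; omega
  have hnext : ¬ (τ.t (j + 1) ≤ x) :=
    Nat.findGreatest_is_greatest (P := fun j => τ.t j ≤ x) (n := τ.D) (by omega) (by omega)
  exact ⟨j, by omega, hPj, by omega⟩

end SegAux

namespace SegAux

lemma findGreatest_seg {n : ℕ} (τ : Seg n) {x : ℕ} (hx : x < n) :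
    Nat.findGreatest (fun j => τ.t j ≤ x) τ.D < τ.D ∧
    τ.t (Nat.findGreatest (fun j => τ.t j ≤ x) τ.D) ≤ x ∧
    x < τ.t (Nat.findGreatest (fun j => τ.t j ≤ x) τ.D + 1) := by
  classical
  have hP0 : τ.t 0 ≤ x := by rw [τ.h0]; omega
  set j := Nat.findGreatest (fun j => τ.t j ≤ x) τ.D with hj
  have hjD : j ≤ τ.D := Nat.findGreatest_le _
  have hPj : τ.t j ≤ x :=
    Nat.findGreatest_spec (P := fun j => τ.t j ≤ x) (Nat.zero_le _) hP0
  have hjne : j ≠ τ.D := by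
    intro h; rw [h, τ.hn] at hPj; omega
  have hnext : ¬ (τ.t (j + 1) ≤ x) :=
    Nat.findGreatest_is_greatest (P := fun j => τ.t j ≤ x) (n := τ.D) (by omega) (by omega)
  exact ⟨by omega, hPj, by omega⟩

end SegAux
namespace SegAux

variable {n : ℕ} {H : Type*} [NormedAddCommGroup H] [InnerProductSpace ℝ H]

/-- The constant value of `Π_τ x` on segment `j`. -/
noncomputable def Cval (τ : Seg n) (x : Fin n → H) (j : ℕ) : H :=
  (((τ.t (j + 1) - τ.t j : ℕ) : ℝ))⁻¹ • ∑ i ∈ τ.seg j, x i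

lemma proj_eq (τ : Seg n) (x : Fin n → H) {j : ℕ} (hj : j < τ.D) (i : Fin n)
    (h1 : τ.t j ≤ (i : ℕ)) (h2 : (i : ℕ) < τ.t (j + 1)) :
    Seg.proj τ x i = Cval τ x j := by
  unfold Seg.proj Cval
  rw [Finset.sum_eq_single_of_mem j (Finset.mem_range.mpr hj)]
  · rw [if_pos ⟨h1, h2⟩]
  · intro ℓ hℓ hne
    rw [if_neg]
    rintro ⟨ha, hb⟩
    rcases lt_or_gt_of_ne hne with hlt | hgt
    · have := t_mono τ (show ℓ + 1 ≤ j by omega) (by omega)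
      omega
    · have := t_mono τ (show j + 1 ≤ ℓ by omega)
        (Nat.le_of_lt (Finset.mem_range.mp hℓ))
      omega

/-- The indices `x ≤ i < y` as a `Finset (Fin n)`. -/
def R (n x y : ℕ) : Finset (Fin n) :=
  Finset.univ.filter fun i : Fin n => x ≤ (i : ℕ) ∧ (i : ℕ) < y

lemma mem_R {x y : ℕ} {i : Fin n} : i ∈ R n x y ↔ x ≤ (i : ℕ) ∧ (i : ℕ) < y := by
  simp [R]

lemma card_R {x y : ℕ} (hy : y ≤ n) : (R n x y).card = y - x := by
  have h : R n x y = (Finset.Ico x y).attachFin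
      (fun m hm => lt_of_lt_of_le (Finset.mem_Ico.mp hm).2 hy) := by
    ext i
    simp [R, Finset.mem_attachFin, Finset.mem_Ico]
  rw [h, Finset.card_attachFin, Nat.card_Ico]

lemma sum_R_const {x y : ℕ} (hy : y ≤ n) (f : Fin n → ℝ) (c : ℝ)
    (hf : ∀ i ∈ R n x y, f i = c) :
    ∑ i ∈ R n x y, f i = ((y - x : ℕ) : ℝ) * c := by
  rw [Finset.sum_congr rfl hf, Finset.sum_const, card_R hy, nsmul_eq_mul]

lemma two_run_bound (τ : Seg n) (μ : Fin n → H) {j x1 y1 x2 y2 : ℕ}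
    (hj : j < τ.D) (hx1 : τ.t j ≤ x1) (h11 : x1 < y1) (h12 : y1 ≤ x2) (h22 : x2 < y2)
    (hy2 : y2 ≤ τ.t (j + 1)) (u w : H)
    (hu : ∀ i : Fin n, x1 ≤ (i : ℕ) → (i : ℕ) < y1 → μ i = u)
    (hw : ∀ i : Fin n, x2 ≤ (i : ℕ) → (i : ℕ) < y2 → μ i = w) :
    ((min (y1 - x1) (y2 - x2) : ℕ) : ℝ) / 2 * ‖u - w‖ ^ 2
      ≤ ∑ i ∈ R n x1 y1 ∪ R n x2 y2, ‖μ i - Seg.proj τ μ i‖ ^ 2 := by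
  have hn2 : τ.t (j + 1) ≤ n := t_le_n τ (by omega)
  have hdisj : Disjoint (R n x1 y1) (R n x2 y2) := by
    rw [Finset.disjoint_left]
    intro i h1 h2
    rw [mem_R] at h1 h2
    omega
  rw [Finset.sum_union hdisj]
  have e1 : ∑ i ∈ R n x1 y1, ‖μ i - Seg.proj τ μ i‖ ^ 2
      = ((y1 - x1 : ℕ) : ℝ) * ‖u - Cval τ μ j‖ ^ 2 := by
    refine sum_R_const (by omega) _ _ (fun i hi => ?_)
    rw [mem_R] at hi
    rw [hu i hi.1 hi.2, proj_eq τ μ hj i (by omega) (by omega)]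
  have e2 : ∑ i ∈ R n x2 y2, ‖μ i - Seg.proj τ μ i‖ ^ 2
      = ((y2 - x2 : ℕ) : ℝ) * ‖w - Cval τ μ j‖ ^ 2 := by
    refine sum_R_const (by omega) _ _ (fun i hi => ?_)
    rw [mem_R] at hi
    rw [hw i hi.1 hi.2, proj_eq τ μ hj i (by omega) (by omega)]
  rw [e1, e2]
  set C := Cval τ μ j
  have htri : ‖u - w‖ ≤ ‖u - C‖ + ‖w - C‖ := by
    have h := norm_sub_le_norm_sub_add_norm_sub u C w
    simpa [norm_sub_rev (C) (w)] using h
  have hmin1 : ((min (y1 - x1) (y2 - x2) : ℕ) : ℝ) ≤ ((y1 - x1 : ℕ) : ℝ) := by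
    exact_mod_cast Nat.min_le_left _ _
  have hmin2 : ((min (y1 - x1) (y2 - x2) : ℕ) : ℝ) ≤ ((y2 - x2 : ℕ) : ℝ) := by
    exact_mod_cast Nat.min_le_right _ _
  have hmin0 : (0 : ℝ) ≤ ((min (y1 - x1) (y2 - x2) : ℕ) : ℝ) := by positivity
  have hsq : ‖u - w‖ ^ 2 ≤ 2 * ‖u - C‖ ^ 2 + 2 * ‖w - C‖ ^ 2 := by
    nlinarith [sq_nonneg (‖u - C‖ - ‖w - C‖), norm_nonneg (u - w), norm_nonneg (u - C),
      norm_nonneg (w - C)]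
  have h1 : ((min (y1 - x1) (y2 - x2) : ℕ) : ℝ) / 2 * ‖u - w‖ ^ 2
      ≤ ((min (y1 - x1) (y2 - x2) : ℕ) : ℝ) / 2 * (2 * ‖u - C‖ ^ 2 + 2 * ‖w - C‖ ^ 2) := by
    apply mul_le_mul_of_nonneg_left hsq (by positivity)
  have h2 := mul_le_mul_of_nonneg_right hmin1 (sq_nonneg ‖u - C‖)
  have h3 := mul_le_mul_of_nonneg_right hmin2 (sq_nonneg ‖w - C‖)
  nlinarith [h1, h2, h3]

end SegAux

namespace SegAux

variable {n : ℕ} {H : Type*} [NormedAddCommGroup H] [InnerProductSpace ℝ H]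

lemma jumpAt_nonneg (τ : Seg n) (μ : Fin n → H) (ℓ : ℕ) : 0 ≤ jumpAt τ μ ℓ := by
  unfold jumpAt
  split
  · exact norm_nonneg _
  · exact le_refl 0

lemma deltaMin_nonneg (τ : Seg n) (μ : Fin n → H) : 0 ≤ deltaMin τ μ := by
  unfold deltaMin
  split
  · exact Finset.le_inf' _ _ (fun b _ => jumpAt_nonneg τ μ b)
  · exact le_refl 0

lemma deltaMin_le_jumpAt (τ : Seg n) (μ : Fin n → H) (hD : 2 ≤ τ.D) {k : ℕ}
    (hk : 0 < k) (hk2 : k < τ.D) : deltaMin τ μ ≤ jumpAt τ μ k := by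
  unfold deltaMin
  rw [dif_pos hD]
  exact Finset.inf'_le _ (Finset.mem_Ioo.mpr ⟨hk, hk2⟩)

lemma sum_le_hnorm2 (S : Finset (Fin n)) (f : Fin n → H) :
    ∑ i ∈ S, ‖f i‖ ^ 2 ≤ hnorm2 f := by
  unfold hnorm2
  exact Finset.sum_le_sum_of_subset_of_nonneg (Finset.subset_univ S)
    (fun i _ _ => by positivity)

lemma strict_point_bound (τs τ : Seg n) (μ : Fin n → H) (hτs : IsTrueSeg τs μ)
    (hDs : 2 ≤ τs.D) {k j : ℕ} (hk0 : 0 < k) (hkD : k < τs.D) (hjD : j < τ.D)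
    (h1 : τ.t j < τs.t k) (h2 : τs.t k < τ.t (j + 1)) :
    ∃ S : Finset (Fin n), (∀ i ∈ S, τ.t j ≤ (i : ℕ) ∧ (i : ℕ) < τ.t (j + 1)) ∧
      ((min (τs.t k - max (τ.t j) (τs.t (k - 1)))
          (min (τ.t (j + 1)) (τs.t (k + 1)) - τs.t k) : ℕ) : ℝ) / 2
        * (deltaMin τs μ) ^ 2 ≤ ∑ i ∈ S, ‖μ i - Seg.proj τ μ i‖ ^ 2 := by
  have hkD1 : k + 1 ≤ τs.D := hkD
  have ha1 : τs.t (k - 1) < τs.t k := t_strict τs (by omega) (by omega)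
  have ha2 : τs.t k < τs.t (k + 1) := τs.hmono k hkD
  have ha3 : τs.t (k + 1) ≤ n := t_le_n τs hkD1
  have haskn : τs.t k < n := by omega
  have hask1n : τs.t (k - 1) < n := by omega
  have hk1 : k - 1 + 1 = k := by omega
  have hconst := hτs.1
  set u := μ ⟨τs.t (k - 1), hask1n⟩ with hudef
  set w := μ ⟨τs.t k, haskn⟩ with hwdef
  have hu : ∀ i : Fin n, max (τ.t j) (τs.t (k - 1)) ≤ (i : ℕ) → (i : ℕ) < τs.t k → μ i = u := by
    intro i hxi hiy
    refine hconst (k - 1) (by omega) i ?_ ⟨τs.t (k - 1), hask1n⟩ ?_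
    · simp only [Seg.seg, Finset.mem_filter, Finset.mem_univ, true_and, hk1]
      omega
    · simp only [Seg.seg, Finset.mem_filter, Finset.mem_univ, true_and, hk1]
      omega
  have hw : ∀ i : Fin n, τs.t k ≤ (i : ℕ) → (i : ℕ) < min (τ.t (j + 1)) (τs.t (k + 1)) → μ i = w := by
    intro i hxi hiy
    refine hconst k hkD i ?_ ⟨τs.t k, haskn⟩ ?_
    · simp only [Seg.seg, Finset.mem_filter, Finset.mem_univ, true_and]
      omega
    · simp only [Seg.seg, Finset.mem_filter, Finset.mem_univ, true_and]
      omega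
  have hprev : μ ⟨τs.t k - 1, by omega⟩ = u := by
    refine hconst (k - 1) (by omega) _ ?_ ⟨τs.t (k - 1), hask1n⟩ ?_
    · simp only [Seg.seg, Finset.mem_filter, Finset.mem_univ, true_and, hk1]
      omega
    · simp only [Seg.seg, Finset.mem_filter, Finset.mem_univ, true_and, hk1]
      omega
  have hjump : jumpAt τs μ k = ‖w - u‖ := by
    unfold jumpAt
    rw [dif_pos ⟨by omega, haskn⟩]
    rw [hprev]
  have hΔle : deltaMin τs μ ≤ ‖u - w‖ := by
    rw [norm_sub_rev, ← hjump]
    exact deltaMin_le_jumpAt τs μ hDs hk0 hkD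
  have hΔ0 : 0 ≤ deltaMin τs μ := deltaMin_nonneg τs μ
  have hΔsq : (deltaMin τs μ) ^ 2 ≤ ‖u - w‖ ^ 2 := by
    have := pow_le_pow_left₀ hΔ0 hΔle 2
    exact this
  refine ⟨R n (max (τ.t j) (τs.t (k - 1))) (τs.t k)
      ∪ R n (τs.t k) (min (τ.t (j + 1)) (τs.t (k + 1))), ?_, ?_⟩
  · intro i hi
    rcases Finset.mem_union.mp hi with h | h <;> rw [mem_R] at h <;> omega
  · have hb := two_run_bound τ μ hjD (le_max_left _ _) (by omega) (le_refl _) (by omega)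
      (min_le_left _ _) u w hu hw
    refine le_trans ?_ hb
    apply mul_le_mul_of_nonneg_left hΔsq (by positivity)

end SegAux

/-- Lemma 5.2: for any segmentation `τ` with fewer segments than the true
segmentation `τ*`, `(1/n)‖μ* − Π_τ μ*‖² ≥ (1/2) Λ̲_{τ*} Δ̲²`. -/
theorem approx_error_lower_bound {H : Type*} [NormedAddCommGroup H] [InnerProductSpace ℝ H]
    {n : ℕ} (μs : Fin n → H) (τs : Seg n) (hτs : IsTrueSeg τs μs) (hDs : 2 ≤ τs.D)
    (τ : Seg n) (hτ : τ.D < τs.D) :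
    (1 / n) * hnorm2 (fun i => μs i - Seg.proj τ μs i)
      ≥ (1 / 2) * Seg.lamMin τs * (deltaMin τs μs) ^ 2 := by
  classical
  set m := (Finset.range τs.D).inf' (Finset.nonempty_range_iff.mpr τs.hD.ne')
      (fun ℓ => τs.t (ℓ + 1) - τs.t ℓ) with hmdef
  have hmgap : ∀ ℓ, ℓ < τs.D → m ≤ τs.t (ℓ + 1) - τs.t ℓ := fun ℓ hℓ =>
    Finset.inf'_le _ (Finset.mem_range.mpr hℓ)
  have hm1 : 1 ≤ m := by
    rw [hmdef]
    apply Finset.le_inf'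
    intro ℓ hℓ
    have := τs.hmono ℓ (Finset.mem_range.mp hℓ)
    omega
  have hnpos : 0 < n := by
    have h0 := SegAux.t_strict τ (show (0:ℕ) < τ.D from τ.hD) (le_refl _)
    rw [τ.h0, τ.hn] at h0
    exact h0
  have hΔ0 : 0 ≤ deltaMin τs μs := SegAux.deltaMin_nonneg τs μs
  have hgap : ∀ k k', 0 < k → k < k' → k' ≤ τs.D → τs.t k + m ≤ τs.t k' := by
    intro k k' h0 hkk hk'
    have h1 := hmgap k (by omega)
    have h2 : τs.t (k + 1) ≤ τs.t k' := SegAux.t_mono τs (by omega) hk'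
    have h3 : τs.t k < τs.t (k + 1) := τs.hmono k (by omega)
    omega
  suffices hT : (m : ℝ) / 2 * (deltaMin τs μs) ^ 2
      ≤ hnorm2 (fun i => μs i - Seg.proj τ μs i) by
    have hlam : Seg.lamMin τs = (m : ℝ) / n := rfl
    rw [ge_iff_le, hlam]
    have hstep : 1 / 2 * ((m : ℝ) / n) * (deltaMin τs μs) ^ 2
        = (1 / n) * ((m : ℝ) / 2 * (deltaMin τs μs) ^ 2) := by ring
    rw [hstep]
    apply mul_le_mul_of_nonneg_left hT (by positivity)
  by_cases hP : ∃ k j, 0 < k ∧ k < τs.D ∧ j < τ.D ∧ τ.t j < τs.t k ∧ τs.t k < τ.t (j + 1) ∧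
      m ≤ min (τs.t k - max (τ.t j) (τs.t (k - 1))) (min (τ.t (j + 1)) (τs.t (k + 1)) - τs.t k)
  · obtain ⟨k, j, hk0, hkD, hjD, h1, h2, hmin⟩ := hP
    obtain ⟨S, hSsub, hSb⟩ := SegAux.strict_point_bound τs τ μs hτs hDs hk0 hkD hjD h1 h2
    refine le_trans (le_trans ?_ hSb) (SegAux.sum_le_hnorm2 S _)
    apply mul_le_mul_of_nonneg_right _ (sq_nonneg _)
    have hc : (m : ℝ) ≤ ((min (τs.t k - max (τ.t j) (τs.t (k - 1)))
        (min (τ.t (j + 1)) (τs.t (k + 1)) - τs.t k) : ℕ) : ℝ) := by exact_mod_cast hmin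
    linarith
  by_cases hQ : ∃ k k' j, 0 < k ∧ k < k' ∧ k' < τs.D ∧ j + 1 < τ.D ∧
      τ.t j < τs.t k ∧ τs.t k < τ.t (j + 1) ∧ τ.t (j + 1) < τs.t k' ∧ τs.t k' < τ.t (j + 2) ∧
      min (τ.t (j + 1)) (τs.t (k + 1)) - τs.t k < τs.t k - max (τ.t j) (τs.t (k - 1)) ∧
      τs.t k' - max (τ.t (j + 1)) (τs.t (k' - 1)) ≤ min (τ.t (j + 2)) (τs.t (k' + 1)) - τs.t k'
  · obtain ⟨k, k', j, hk0, hkk, hkD', hj1D, hA1, hA2, hB1, hB2, hq, hp'⟩ := hQ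
    obtain ⟨S1, hS1, hb1⟩ := SegAux.strict_point_bound τs τ μs hτs hDs hk0 (by omega)
      (by omega) hA1 hA2
    obtain ⟨S2, hS2, hb2⟩ := SegAux.strict_point_bound τs τ μs hτs hDs
      (show 0 < k' by omega) hkD' hj1D hB1 hB2
    have hjj : j + 1 + 1 = j + 2 := rfl
    rw [hjj] at hb2 hS2
    have hmin1 : min (τs.t k - max (τ.t j) (τs.t (k - 1)))
        (min (τ.t (j + 1)) (τs.t (k + 1)) - τs.t k)
        = min (τ.t (j + 1)) (τs.t (k + 1)) - τs.t k := min_eq_right (by omega)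
    have hmin2 : min (τs.t k' - max (τ.t (j + 1)) (τs.t (k' - 1)))
        (min (τ.t (j + 2)) (τs.t (k' + 1)) - τs.t k')
        = τs.t k' - max (τ.t (j + 1)) (τs.t (k' - 1)) := min_eq_left hp'
    rw [hmin1] at hb1
    rw [hmin2] at hb2
    have hdisj : Disjoint S1 S2 := by
      rw [Finset.disjoint_left]
      intro i h1 h2
      obtain ⟨c1, c2⟩ := hS1 i h1
      obtain ⟨c3, c4⟩ := hS2 i h2
      omega
    have hsum : ∑ i ∈ S1, ‖μs i - Seg.proj τ μs i‖ ^ 2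
        + ∑ i ∈ S2, ‖μs i - Seg.proj τ μs i‖ ^ 2
        ≤ hnorm2 (fun i => μs i - Seg.proj τ μs i) := by
      rw [← Finset.sum_union hdisj]
      exact SegAux.sum_le_hnorm2 _ _
    have hqp : m ≤ (min (τ.t (j + 1)) (τs.t (k + 1)) - τs.t k)
        + (τs.t k' - max (τ.t (j + 1)) (τs.t (k' - 1))) := by
      have g1 := hmgap k (by omega)
      have g2 := hmgap (k' - 1) (by omega)
      rw [show k' - 1 + 1 = k' by omega] at g2
      have g3 : τs.t k + m ≤ τs.t k' := hgap k k' hk0 hkk (by omega)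
      have g4 : τs.t (k' - 1) ≤ τs.t k' := SegAux.t_mono τs (by omega) (by omega)
      omega
    have hcast : (m : ℝ) ≤ ((min (τ.t (j + 1)) (τs.t (k + 1)) - τs.t k : ℕ) : ℝ)
        + ((τs.t k' - max (τ.t (j + 1)) (τs.t (k' - 1)) : ℕ) : ℝ) := by
      exact_mod_cast hqp
    have hfin : (m : ℝ) / 2 * (deltaMin τs μs) ^ 2
        ≤ ((min (τ.t (j + 1)) (τs.t (k + 1)) - τs.t k : ℕ) : ℝ) / 2 * (deltaMin τs μs) ^ 2
        + ((τs.t k' - max (τ.t (j + 1)) (τs.t (k' - 1)) : ℕ) : ℝ) / 2 * (deltaMin τs μs) ^ 2 := by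
      nlinarith [mul_le_mul_of_nonneg_right hcast (sq_nonneg (deltaMin τs μs))]
    linarith [add_le_add hb1 hb2, hsum, hfin]
  -- Neither a single good change-point nor a good pair exists: contradiction.
  exfalso
  set f : ℕ → ℕ := fun k => Nat.findGreatest (fun j => τ.t j ≤ τs.t k) τ.D with hfdef
  have hf : ∀ k, 0 < k → k < τs.D →
      f k < τ.D ∧ τ.t (f k) ≤ τs.t k ∧ τs.t k < τ.t (f k + 1) := by
    intro k hk0 hkD
    have hxn : τs.t k < n := by
      have h1 := τs.hmono k hkD
      have h2 := SegAux.t_le_n τs (show k + 1 ≤ τs.D from hkD)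
      omega
    exact SegAux.findGreatest_seg τ hxn
  set g : ℕ → ℕ := fun k => if τs.t k = τ.t (f k) then f k else
      (if τs.t k - max (τ.t (f k)) (τs.t (k - 1))
          ≤ min (τ.t (f k + 1)) (τs.t (k + 1)) - τs.t k then f k else f k + 1) with hgdef
  have hgval : ∀ k, g k = if τs.t k = τ.t (f k) then f k else
      (if τs.t k - max (τ.t (f k)) (τs.t (k - 1))
          ≤ min (τ.t (f k + 1)) (τs.t (k + 1)) - τs.t k then f k else f k + 1) :=
    fun k => rfl
  have hclass : ∀ k, 0 < k → k < τs.D →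
      (0 < g k ∧ g k < τ.D) ∧
      ((g k = f k ∧ τ.t (g k) = τs.t k)
      ∨ (g k = f k ∧ τ.t (g k) < τs.t k ∧ τs.t k - τ.t (g k) < m ∧
          τs.t k - max (τ.t (f k)) (τs.t (k - 1))
            ≤ min (τ.t (f k + 1)) (τs.t (k + 1)) - τs.t k ∧
          τ.t (f k) < τs.t k)
      ∨ (g k = f k + 1 ∧ τs.t k < τ.t (g k) ∧ τ.t (g k) - τs.t k < m ∧
          min (τ.t (f k + 1)) (τs.t (k + 1)) - τs.t k
            < τs.t k - max (τ.t (f k)) (τs.t (k - 1)) ∧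
          τ.t (f k) < τs.t k)) := by
    intro k hk0 hkD
    obtain ⟨hfD, hf1, hf2⟩ := hf k hk0 hkD
    have hknpos : 0 < τs.t k := by
      have h := SegAux.t_strict τs hk0 (by omega)
      rw [τs.h0] at h
      exact h
    have hgk1 : τs.t (k - 1) < τs.t k := SegAux.t_strict τs (by omega) (by omega)
    have hgapk1 : m ≤ τs.t k - τs.t (k - 1) := by
      have hg := hmgap (k - 1) (by omega)
      rw [show k - 1 + 1 = k by omega] at hg
      exact hg
    have hgapk : m ≤ τs.t (k + 1) - τs.t k := hmgap k hkD
    have hkn1 : τs.t (k + 1) ≤ n := SegAux.t_le_n τs (show k + 1 ≤ τs.D from hkD)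
    by_cases he : τs.t k = τ.t (f k)
    · have hgk : g k = f k := by rw [hgval k, if_pos he]
      have hg0 : 0 < g k := by
        rw [hgk]
        rcases Nat.eq_zero_or_pos (f k) with h0 | h0
        · exfalso
          rw [h0, τ.h0] at he
          omega
        · exact h0
      exact ⟨⟨hg0, by omega⟩, Or.inl ⟨hgk, by rw [hgk, ← he]⟩⟩
    · have hstrict : τ.t (f k) < τs.t k := by omega
      have hnP : min (τs.t k - max (τ.t (f k)) (τs.t (k - 1)))
          (min (τ.t (f k + 1)) (τs.t (k + 1)) - τs.t k) < m := by
        by_contra hge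
        exact hP ⟨k, f k, hk0, hkD, hfD, hstrict, hf2, by omega⟩
      by_cases hside : τs.t k - max (τ.t (f k)) (τs.t (k - 1))
          ≤ min (τ.t (f k + 1)) (τs.t (k + 1)) - τs.t k
      · have hgk : g k = f k := by rw [hgval k, if_neg he, if_pos hside]
        have hmax : max (τ.t (f k)) (τs.t (k - 1)) = τ.t (f k) := by
          rcases Nat.le_total (τs.t (k - 1)) (τ.t (f k)) with h | h
          · exact max_eq_left h
          · exfalso
            have hmx : max (τ.t (f k)) (τs.t (k - 1)) = τs.t (k - 1) := max_eq_right h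
            omega
        have hplt : τs.t k - τ.t (f k) < m := by omega
        have hg0 : 0 < g k := by
          rw [hgk]
          rcases Nat.eq_zero_or_pos (f k) with h0 | h0
          · exfalso
            rw [h0, τ.h0] at hplt hmax
            omega
          · exact h0
        refine ⟨⟨hg0, by omega⟩, Or.inr (Or.inl ⟨hgk, ?_, ?_, hside, hstrict⟩)⟩
        · rw [hgk]; exact hstrict
        · rw [hgk]; exact hplt
      · have hgk : g k = f k + 1 := by rw [hgval k, if_neg he, if_neg hside]
        have hqlt : min (τ.t (f k + 1)) (τs.t (k + 1)) - τs.t k < m := by omega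
        have hminq : min (τ.t (f k + 1)) (τs.t (k + 1)) = τ.t (f k + 1) := by
          rcases Nat.le_total (τ.t (f k + 1)) (τs.t (k + 1)) with h | h
          · exact min_eq_left h
          · exfalso
            have hmx : min (τ.t (f k + 1)) (τs.t (k + 1)) = τs.t (k + 1) := min_eq_right h
            omega
        have hgD : g k < τ.D := by
          rw [hgk]
          rcases Nat.lt_or_ge (f k + 1) τ.D with h | h
          · exact h
          · exfalso
            have hfk1D : f k + 1 = τ.D := by omega
            have hn' : τ.t (f k + 1) = n := by rw [hfk1D, τ.hn]
            omega
        refine ⟨⟨by omega, hgD⟩, Or.inr (Or.inr ⟨hgk, ?_, ?_, by omega, hstrict⟩)⟩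
        · rw [hgk]; exact hf2
        · rw [hgk]; omega
  have haux : ∀ k k', 0 < k → k < k' → k' < τs.D → g k = g k' → False := by
    intro k k' hk0 hkk hk'D heq
    obtain ⟨⟨hg0, hgD⟩, hcase⟩ := hclass k hk0 (by omega)
    obtain ⟨⟨hg0', hgD'⟩, hcase'⟩ := hclass k' (by omega) hk'D
    obtain ⟨hfD, hf1, hf2⟩ := hf k hk0 (by omega)
    obtain ⟨hfD', hf1', hf2'⟩ := hf k' (by omega) hk'D
    have hsep : τs.t k + m ≤ τs.t k' := hgap k k' hk0 hkk (by omega)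
    have hseq : τ.t (g k) = τ.t (g k') := by rw [heq]
    rcases hcase with hE | hL | hR
    · rcases hcase' with hE' | hL' | hR'
      · omega
      · obtain ⟨-, c1, c2, -, -⟩ := hL'; omega
      · obtain ⟨-, c1, c2, -, -⟩ := hR'; omega
    · rcases hcase' with hE' | hL' | hR'
      · obtain ⟨-, c1, c2, -, -⟩ := hL; omega
      · obtain ⟨-, c1, c2, -, -⟩ := hL
        obtain ⟨-, c1', c2', -, -⟩ := hL'; omega
      · obtain ⟨-, c1, c2, -, -⟩ := hL
        obtain ⟨-, c1', c2', -, -⟩ := hR'; omega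
    · rcases hcase' with hE' | hL' | hR'
      · obtain ⟨-, c1, c2, -, -⟩ := hR; omega
      · -- the (Rq, Lp') pattern: contradicts ¬Q
        obtain ⟨hgk, c1, c2, c3, c4⟩ := hR
        obtain ⟨hgk', c1', c2', c3', c4'⟩ := hL'
        have hfk : f k' = f k + 1 := by
          apply SegAux.t_inj τ (by omega) (by omega)
          rw [← hgk', ← hseq, hgk]
        apply hQ
        have e1 : τ.t (f k + 1) = τ.t (f k') := by rw [hfk]
        have e2 : τ.t (f k + 2) = τ.t (f k' + 1) := by rw [hfk]
        have e3 : max (τ.t (f k + 1)) (τs.t (k' - 1)) = max (τ.t (f k')) (τs.t (k' - 1)) := by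
          rw [hfk]
        refine ⟨k, k', f k, hk0, hkk, hk'D, by omega, c4, hf2, ?_, ?_, c3, ?_⟩
        · rw [e1, ← hgk']; exact c1'
        · rw [show f k + 2 = f k' + 1 by omega]; exact hf2'
        · rw [show f k + 2 = f k' + 1 by omega, e1]
          exact c3'
      · obtain ⟨-, c1, c2, -, -⟩ := hR
        obtain ⟨-, c1', c2', -, -⟩ := hR'; omega
  have hmaps : ∀ k ∈ Finset.Ioo 0 τs.D, g k ∈ Finset.Ioo 0 τ.D := by
    intro k hk
    rw [Finset.mem_Ioo] at hk ⊢
    exact (hclass k hk.1 hk.2).1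
  have hinj : Set.InjOn g (Finset.Ioo 0 τs.D) := by
    intro k hk k' hk' heq
    simp only [Finset.coe_Ioo, Set.mem_Ioo] at hk hk'
    by_contra hne
    rcases Nat.lt_or_ge k k' with h | h
    · exact haux k k' hk.1 h hk'.2 heq
    · exact haux k' k hk'.1 (by omega) hk.2 heq.symm
  have hcard := Finset.card_le_card_of_injOn g hmaps hinj
  rw [Nat.card_Ioo, Nat.card_Ioo] at hcard
  omega
end
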